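/- arXiv:1611.06626 — 2 statements merged into one kernel-verified Lean document; each statement's English description precedes it below -/
import Mathlib

section
/- Let π be a continuous piecewise linear minimal valid function with the following property: if π admits a nonzero effective perturbation, then π admits a nonzero piecewise linear effective perturbation. Then the following are equivalent: (1) π is extreme; (2) π is a facet; (3) π is a weak facet. -/
/-- A finite-support function `y : ℝ → ℕ` is feasible if `∑ r, r·y(r) − f ∈ ℤ`. -/
def Feasible (f : ℝ) (y : ℝ →₀ ℕ) : Prop :=
  ∃ z : ℤ, (∑ r ∈ y.support, r * (y r : ℝ)) - f = (z : ℝ)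

/-- `π` is a valid function: nonnegative, and `∑ r, π(r)·y(r) ≥ 1` for every feasible `y`. -/
def Valid (f : ℝ) (π : ℝ → ℝ) : Prop :=
  (∀ x, 0 ≤ π x) ∧
    ∀ y : ℝ →₀ ℕ, Feasible f y → 1 ≤ ∑ r ∈ y.support, π r * (y r : ℝ)

/-- A valid function is minimal if no other valid function is pointwise ≤ it. -/
def MinimalValid (f : ℝ) (π : ℝ → ℝ) : Prop :=
  Valid f π ∧ ¬ ∃ π' : ℝ → ℝ, Valid f π' ∧ (∀ x, π' x ≤ π x) ∧ π' ≠ π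

/-- `P(π)`: the set of feasible `y` with `∑ r, π(r)·y(r) = 1`. -/
def Pset (f : ℝ) (π : ℝ → ℝ) : Set (ℝ →₀ ℕ) :=
  {y | Feasible f y ∧ ∑ r ∈ y.support, π r * (y r : ℝ) = 1}

/-- `E(π) = {(x,y) : π(x) + π(y) = π(x+y)}`. -/
def Eset (π : ℝ → ℝ) : Set (ℝ × ℝ) :=
  {p | π p.1 + π p.2 = π (p.1 + p.2)}

/-- A valid function `π` is a facet if every valid `π'` with `P(π) ⊆ P(π')` equals `π`. -/
def IsFacet (f : ℝ) (π : ℝ → ℝ) : Prop :=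
  Valid f π ∧ ∀ π' : ℝ → ℝ, Valid f π' → Pset f π ⊆ Pset f π' → π' = π

/-- A valid function `π` is a weak facet if every valid `π'` with `P(π) ⊆ P(π')`
has `P(π) = P(π')`. -/
def IsWeakFacet (f : ℝ) (π : ℝ → ℝ) : Prop :=
  Valid f π ∧ ∀ π' : ℝ → ℝ, Valid f π' → Pset f π ⊆ Pset f π' → Pset f π = Pset f π'

/-- A valid function `π` is extreme if whenever `π = (π¹ + π²)/2` with `π¹, π²` valid,
then `π¹ = π² = π`. -/
def ExtremeFunc (f : ℝ) (π : ℝ → ℝ) : Prop :=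
  Valid f π ∧ ∀ π₁ π₂ : ℝ → ℝ, Valid f π₁ → Valid f π₂ →
    (∀ x, π x = (π₁ x + π₂ x) / 2) → π₁ = π ∧ π₂ = π

/-- `π` is piecewise linear: there is a closed, discrete set `B ⊆ ℝ` of breakpoints
such that `π` is affine on each connected component of `ℝ \ B`. -/
def PiecewiseLinear (π : ℝ → ℝ) : Prop :=
  ∃ B : Set ℝ, IsClosed B ∧
    (∀ x ∈ B, ∃ ε > (0 : ℝ), ∀ y ∈ B, |y - x| < ε → y = x) ∧
    (∀ x ∉ B, ∃ a b : ℝ, ∀ z ∈ connectedComponentIn Bᶜ x, π z = a * z + b)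

/-- `π` is continuous piecewise linear. -/
def ContPiecewiseLinear (π : ℝ → ℝ) : Prop :=
  PiecewiseLinear π ∧ Continuous π

/-- `π̃` is an effective perturbation of `π`: for some `ε > 0`,
both `π + ε·π̃` and `π − ε·π̃` are minimal valid. -/
def EffPerturb (f : ℝ) (π πt : ℝ → ℝ) : Prop :=
  ∃ ε > (0 : ℝ), MinimalValid f (fun x => π x + ε * πt x) ∧
    MinimalValid f (fun x => π x - ε * πt x)

set_option maxHeartbeats 1000000

noncomputable section

def SS (g : ℝ → ℝ) (y : ℝ →₀ ℕ) : ℝ := ∑ r ∈ y.support, g r * (y r : ℝ)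

lemma SS_eq_sum (g : ℝ → ℝ) (y : ℝ →₀ ℕ) : SS g y = y.sum (fun r n => g r * (n : ℝ)) := rfl

lemma SS_add (g : ℝ → ℝ) (y₁ y₂ : ℝ →₀ ℕ) : SS g (y₁ + y₂) = SS g y₁ + SS g y₂ := by
  simp only [SS_eq_sum]
  exact Finsupp.sum_add_index' (fun a => by simp) (fun a n m => by push_cast; ring)

lemma SS_single (g : ℝ → ℝ) (a : ℝ) (n : ℕ) : SS g (Finsupp.single a n) = g a * n := by
  simp only [SS_eq_sum]
  exact Finsupp.sum_single_index (by simp)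

def sigy (y : ℝ →₀ ℕ) : ℝ := SS (fun r => r) y

lemma sigy_add (y₁ y₂ : ℝ →₀ ℕ) : sigy (y₁ + y₂) = sigy y₁ + sigy y₂ := SS_add _ _ _

lemma sigy_single (a : ℝ) (n : ℕ) : sigy (Finsupp.single a n) = a * n := SS_single _ _ _

lemma SS_nonneg {g : ℝ → ℝ} (hg : ∀ x, 0 ≤ g x) (y : ℝ →₀ ℕ) : 0 ≤ SS g y :=
  Finset.sum_nonneg (fun r _ => mul_nonneg (hg r) (Nat.cast_nonneg _))

lemma SS_congr_on {g g' : ℝ → ℝ} {y : ℝ →₀ ℕ} (h : ∀ r ∈ y.support, g r = g' r) :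
    SS g y = SS g' y := Finset.sum_congr rfl (fun r hr => by rw [h r hr])

lemma SS_comb (a b : ℝ) (g₁ g₂ : ℝ → ℝ) (y : ℝ →₀ ℕ) :
    SS (fun x => a * g₁ x + b * g₂ x) y = a * SS g₁ y + b * SS g₂ y := by
  unfold SS
  rw [Finset.mul_sum, Finset.mul_sum, ← Finset.sum_add_distrib]
  exact Finset.sum_congr rfl (fun r _ => by ring)

lemma SS_sub_comb (g₁ g₂ : ℝ → ℝ) (y : ℝ →₀ ℕ) :
    SS (fun x => g₁ x - g₂ x) y = SS g₁ y - SS g₂ y := by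
  have := SS_comb 1 (-1) g₁ g₂ y
  simp only [one_mul, neg_one_mul] at this
  rw [sub_eq_add_neg, ← this]
  exact Finset.sum_congr rfl (fun r _ => by ring)

lemma single_add_erase' (a : ℝ) (y : ℝ →₀ ℕ) :
    Finsupp.single a (y a) + y.erase a = y := Finsupp.single_add_erase a y

lemma SS_erase (g : ℝ → ℝ) (a : ℝ) (y : ℝ →₀ ℕ) :
    SS g y = g a * (y a : ℝ) + SS g (y.erase a) := by
  conv_lhs => rw [← single_add_erase' a y]
  rw [SS_add, SS_single]

lemma sigy_erase (a : ℝ) (y : ℝ →₀ ℕ) :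
    sigy y = a * (y a : ℝ) + sigy (y.erase a) := SS_erase _ a y

lemma erase_not_mem (a : ℝ) (y : ℝ →₀ ℕ) : a ∉ (y.erase a).support := by
  simp

/- Feasibility restated -/
lemma feasible_iff (f : ℝ) (y : ℝ →₀ ℕ) : Feasible f y ↔ ∃ z : ℤ, sigy y - f = (z : ℝ) :=
  Iff.rfl

lemma valid_SS {f : ℝ} {ρ : ℝ → ℝ} (h : Valid f ρ) {y : ℝ →₀ ℕ} (hy : Feasible f y) :
    1 ≤ SS ρ y := h.2 y hy

lemma pset_mem_iff {f : ℝ} {ρ : ℝ → ℝ} {y : ℝ →₀ ℕ} :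
    y ∈ Pset f ρ ↔ Feasible f y ∧ SS ρ y = 1 := Iff.rfl

/-- The canonical pair configuration. -/
def pairy (f x : ℝ) : ℝ →₀ ℕ := Finsupp.single x 1 + Finsupp.single (f - x) 1

lemma feas_of_sigy {f : ℝ} {y : ℝ →₀ ℕ} (z : ℤ) (h : sigy y = f + z) : Feasible f y := by
  refine ⟨z, ?_⟩
  have hdef : (∑ r ∈ y.support, r * ((y r : ℕ) : ℝ)) = sigy y := rfl
  rw [hdef, h]; ring

lemma pairy_feas (f x : ℝ) : Feasible f (pairy f x) := by
  refine feas_of_sigy 0 ?_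
  rw [pairy, sigy_add, sigy_single, sigy_single]; push_cast; ring

lemma SS_pairy (g : ℝ → ℝ) (f x : ℝ) : SS g (pairy f x) = g x + g (f - x) := by
  rw [pairy, SS_add, SS_single, SS_single]; push_cast; ring

lemma valid_pair {f : ℝ} {ρ : ℝ → ℝ} (h : Valid f ρ) (x : ℝ) :
    1 ≤ ρ x + ρ (f - x) := by
  have := valid_SS h (pairy_feas f x)
  rwa [SS_pairy] at this

/-- the triple configuration {a, b, f-a-b}. -/
def tripy (f a b : ℝ) : ℝ →₀ ℕ :=
  Finsupp.single a 1 + Finsupp.single b 1 + Finsupp.single (f - a - b) 1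

lemma tripy_feas (f a b : ℝ) : Feasible f (tripy f a b) := by
  refine feas_of_sigy 0 ?_
  rw [tripy, sigy_add, sigy_add, sigy_single, sigy_single, sigy_single]; push_cast; ring

lemma SS_tripy (g : ℝ → ℝ) (f a b : ℝ) :
    SS g (tripy f a b) = g a + g b + g (f - a - b) := by
  rw [tripy, SS_add, SS_add, SS_single, SS_single, SS_single]; push_cast; ring

/-- the n-fold configuration n·{x} + {f - n x}. -/
def nfy (f x : ℝ) (n : ℕ) : ℝ →₀ ℕ := Finsupp.single x n + Finsupp.single (f - n * x) 1

lemma nfy_feas (f x : ℝ) (n : ℕ) : Feasible f (nfy f x n) := by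
  refine feas_of_sigy 0 ?_
  rw [nfy, sigy_add, sigy_single, sigy_single]; push_cast; ring

lemma SS_nfy (g : ℝ → ℝ) (f x : ℝ) (n : ℕ) :
    SS g (nfy f x n) = n * g x + g (f - n * x) := by
  rw [nfy, SS_add, SS_single, SS_single]; push_cast; ring

-- chunk C: minimal function theory
lemma valid_def (f : ℝ) (ρ : ℝ → ℝ) :
    Valid f ρ ↔ ((∀ x, 0 ≤ ρ x) ∧ ∀ y : ℝ →₀ ℕ, Feasible f y → 1 ≤ SS ρ y) := Iff.rfl

lemma mv_all {f : ℝ} {ρ : ℝ → ℝ} (hρ : MinimalValid f ρ) {θ : ℝ → ℝ}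
    (hθ : Valid f θ) (hle : ∀ x, θ x ≤ ρ x) : θ = ρ := by
  by_contra h
  exact hρ.2 ⟨θ, hθ, hle, h⟩

lemma update_SS (ρ : ℝ → ℝ) (a v : ℝ) (y : ℝ →₀ ℕ) :
    SS (Function.update ρ a v) y = v * (y a : ℝ) + SS ρ (y.erase a) := by
  rw [SS_erase (Function.update ρ a v) a y, Function.update_self]
  congr 1
  refine SS_congr_on (fun r hr => ?_)
  have : r ≠ a := by
    intro h; subst h; exact (erase_not_mem r y) hr
  rw [Function.update_of_ne this]

lemma sigy_eq_raw (y : ℝ →₀ ℕ) : (∑ r ∈ y.support, r * ((y r : ℕ) : ℝ)) = sigy y := rfl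

lemma feas_sigy {f : ℝ} {y : ℝ →₀ ℕ} (hy : Feasible f y) : ∃ z : ℤ, sigy y = f + z := by
  obtain ⟨w, hw⟩ := hy
  rw [sigy_eq_raw] at hw
  exact ⟨w, by linarith⟩

lemma erase_feas_int {f : ℝ} {y : ℝ →₀ ℕ} (hy : Feasible f y) (z : ℤ) :
    Feasible f (y.erase (z : ℝ)) := by
  obtain ⟨w, hw⟩ := feas_sigy hy
  refine feas_of_sigy (w - z * (y (z:ℝ) : ℕ)) ?_
  have h2 := sigy_erase (z : ℝ) y
  push_cast
  rw [hw] at h2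
  linarith

lemma mv_zero_int {f : ℝ} {ρ : ℝ → ℝ} (hρ : MinimalValid f ρ) (z : ℤ) : ρ (z : ℝ) = 0 := by
  set θ := Function.update ρ (z : ℝ) 0 with hθdef
  have hval : Valid f θ := by
    constructor
    · intro x
      by_cases hx : x = (z : ℝ)
      · subst hx; simp [θ]
      · rw [hθdef, Function.update_of_ne hx]; exact hρ.1.1 x
    · intro y hy
      have h1 : SS θ y = SS ρ (y.erase (z : ℝ)) := by
        rw [hθdef, update_SS]; ring
      show (1:ℝ) ≤ SS θ y
      rw [h1]
      exact valid_SS hρ.1 (erase_feas_int hy z)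
  have hle : ∀ x, θ x ≤ ρ x := by
    intro x
    by_cases hx : x = (z : ℝ)
    · subst hx; simp [θ]; exact hρ.1.1 _
    · rw [hθdef, Function.update_of_ne hx]
  have := mv_all hρ hval hle
  have h0 : θ (z : ℝ) = 0 := by simp [θ]
  rw [this] at h0
  exact h0

lemma mv_zero {f : ℝ} {ρ : ℝ → ℝ} (hρ : MinimalValid f ρ) : ρ 0 = 0 := by
  have := mv_zero_int hρ 0
  norm_num at this
  exact this

lemma erase_add_feas {f a b : ℝ} {y : ℝ →₀ ℕ} (hy : Feasible f y) :
    Feasible f (y.erase (a + b) + Finsupp.single a (y (a+b)) + Finsupp.single b (y (a+b))) := by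
  obtain ⟨w, hw⟩ := feas_sigy hy
  refine feas_of_sigy w ?_
  rw [sigy_add, sigy_add, sigy_single, sigy_single]
  have h2 := sigy_erase (a + b) y
  rw [hw] at h2
  linarith

lemma mv_subadd {f : ℝ} {ρ : ℝ → ℝ} (hρ : MinimalValid f ρ) (a b : ℝ) :
    ρ (a + b) ≤ ρ a + ρ b := by
  by_contra hcon
  push_neg at hcon
  set θ := Function.update ρ (a + b) (ρ a + ρ b) with hθdef
  have hval : Valid f θ := by
    constructor
    · intro x
      by_cases hx : x = a + b
      · subst hx; rw [hθdef, Function.update_self]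
        exact add_nonneg (hρ.1.1 a) (hρ.1.1 b)
      · rw [hθdef, Function.update_of_ne hx]; exact hρ.1.1 x
    · intro y hy
      show (1:ℝ) ≤ SS θ y
      have h1 : SS θ y = (ρ a + ρ b) * (y (a+b) : ℝ) + SS ρ (y.erase (a+b)) := by
        rw [hθdef, update_SS]
      have h2 : SS ρ (y.erase (a + b) + Finsupp.single a (y (a+b)) + Finsupp.single b (y (a+b)))
          = SS ρ (y.erase (a+b)) + ρ a * (y (a+b) : ℝ) + ρ b * (y (a+b) : ℝ) := by
        rw [SS_add, SS_add, SS_single, SS_single]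
      have h3 := valid_SS hρ.1 (erase_add_feas (a := a) (b := b) hy)
      rw [h2] at h3
      rw [h1]; linarith
  have hle : ∀ x, θ x ≤ ρ x := by
    intro x
    by_cases hx : x = a + b
    · subst hx; rw [hθdef, Function.update_self]; linarith
    · rw [hθdef, Function.update_of_ne hx]
  have := mv_all hρ hval hle
  have h0 : θ (a + b) = ρ a + ρ b := by rw [hθdef, Function.update_self]
  rw [this] at h0
  linarith

lemma mv_le_one {f : ℝ} {ρ : ℝ → ℝ} (hρ : MinimalValid f ρ) (x₀ : ℝ) : ρ x₀ ≤ 1 := by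
  set θ := Function.update ρ x₀ (min 1 (ρ x₀)) with hθdef
  have hval : Valid f θ := by
    constructor
    · intro x
      by_cases hx : x = x₀
      · subst hx; rw [hθdef, Function.update_self]
        exact le_min zero_le_one (hρ.1.1 x)
      · rw [hθdef, Function.update_of_ne hx]; exact hρ.1.1 x
    · intro y hy
      show (1:ℝ) ≤ SS θ y
      have h1 : SS θ y = (min 1 (ρ x₀)) * (y x₀ : ℝ) + SS ρ (y.erase x₀) := by
        rw [hθdef, update_SS]
      by_cases hm : y x₀ = 0
      · have : SS θ y = SS ρ y := by
          refine SS_congr_on (fun r hr => ?_)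
          have hrne : r ≠ x₀ := by
            intro h
            rw [h] at hr
            exact (Finsupp.mem_support_iff.mp hr) hm
          rw [hθdef, Function.update_of_ne hrne]
        rw [this]; exact valid_SS hρ.1 hy
      · rcases le_or_gt (ρ x₀) 1 with h | h
        · have : SS θ y = SS ρ y := by
            have : min 1 (ρ x₀) = ρ x₀ := min_eq_right h
            rw [h1, this, ← SS_erase]
          rw [this]; exact valid_SS hρ.1 hy
        · have hmin : min 1 (ρ x₀) = 1 := min_eq_left (le_of_lt h)
          have hm1 : (1 : ℝ) ≤ (y x₀ : ℝ) := by
            have : 1 ≤ y x₀ := Nat.one_le_iff_ne_zero.mpr hm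
            exact_mod_cast this
          have := SS_nonneg (fun x => hρ.1.1 x) (y.erase x₀)
          rw [h1, hmin]; nlinarith
  have hle : ∀ x, θ x ≤ ρ x := by
    intro x
    by_cases hx : x = x₀
    · subst hx; rw [hθdef, Function.update_self]; exact min_le_right _ _
    · rw [hθdef, Function.update_of_ne hx]
  have := mv_all hρ hval hle
  have h0 : θ x₀ = min 1 (ρ x₀) := by rw [hθdef, Function.update_self]
  rw [this] at h0
  calc ρ x₀ = min 1 (ρ x₀) := h0
    _ ≤ 1 := min_le_left _ _

lemma mv_periodic {f : ℝ} {ρ : ℝ → ℝ} (hρ : MinimalValid f ρ) (x : ℝ) (z : ℤ) :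
    ρ (x + z) = ρ x := by
  have h1 : ρ (x + z) ≤ ρ x + ρ (z : ℝ) := mv_subadd hρ x z
  have h2 : ρ x ≤ ρ (x + z) + ρ ((-z : ℤ) : ℝ) := by
    have := mv_subadd hρ (x + z) ((-z : ℤ) : ℝ)
    have he : x + z + ((-z : ℤ) : ℝ) = x := by push_cast; ring
    rwa [he] at this
  rw [mv_zero_int hρ z] at h1
  rw [mv_zero_int hρ (-z)] at h2
  linarith

/-- iterated subadditivity -/
lemma subadd_nmul {g : ℝ → ℝ} (g0 : g 0 = 0)
    (hsub : ∀ a b, g (a + b) ≤ g a + g b) (n : ℕ) (x : ℝ) :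
    g (n * x) ≤ n * g x := by
  induction n with
  | zero => simp [g0]
  | succ n ih =>
      have : ((n : ℝ) + 1) * x = n * x + x := by ring
      push_cast
      rw [this]
      calc g (n * x + x) ≤ g (n * x) + g x := hsub _ _
        _ ≤ n * g x + g x := by linarith
        _ = (n + 1) * g x := by ring

/-- Lemma A : superadditivity over configurations -/
lemma lemA {g : ℝ → ℝ} (g0 : g 0 = 0)
    (hsub : ∀ a b, g (a + b) ≤ g a + g b) (y : ℝ →₀ ℕ) :
    g (sigy y) ≤ SS g y := by
  induction y using Finsupp.induction with
  | zero => simp [sigy, SS, g0]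
  | single_add a n y ha hn ih =>
      rw [sigy_add, SS_add, sigy_single, SS_single]
      calc g (a * n + sigy y) ≤ g (a * n) + g (sigy y) := hsub _ _
        _ ≤ g (a * n) + SS g y := by linarith
        _ ≤ n * g a + SS g y := by
            have := subadd_nmul g0 hsub n a
            rw [mul_comm a (n:ℝ)]; linarith
        _ = g a * n + SS g y := by ring
-- chunk D : f-value, symmetry, converse minimality
lemma mv_f_one {f : ℝ} {ρ : ℝ → ℝ} (hρ : MinimalValid f ρ) : ρ f = 1 := by
  have h1 : Feasible f (Finsupp.single f 1) := by
    refine feas_of_sigy 0 ?_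
    rw [sigy_single]; push_cast; ring
  have h2 := valid_SS hρ.1 h1
  rw [SS_single] at h2
  push_cast at h2
  have := mv_le_one hρ f
  linarith

lemma mv_sym {f : ℝ} {ρ : ℝ → ℝ} (hρ : MinimalValid f ρ) (x : ℝ) :
    ρ x + ρ (f - x) = 1 := by
  refine le_antisymm ?_ (valid_pair hρ.1 x)
  by_cases hx : ρ x = 0
  · rw [hx]; have := mv_le_one hρ (f - x); linarith
  have hxpos : 0 < ρ x := lt_of_le_of_ne (hρ.1.1 x) (Ne.symm hx)
  refine le_of_forall_pos_le_add (fun η hη => ?_)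
  set c := min (η * ρ x / 2) (ρ x / 2) with hcdef
  have hc0 : 0 < c := lt_min (by positivity) (by positivity)
  have hcle : c ≤ ρ x / 2 := min_le_right _ _
  have hcle2 : c ≤ η * ρ x / 2 := min_le_left _ _
  set θ := Function.update ρ x (ρ x - c) with hθdef
  have hle : ∀ u, θ u ≤ ρ u := by
    intro u
    by_cases hu : u = x
    · subst hu; rw [hθdef, Function.update_self]; linarith
    · rw [hθdef, Function.update_of_ne hu]
  have hne : θ ≠ ρ := by
    intro h
    have := congrFun h x
    rw [hθdef, Function.update_self] at this
    linarith
  have hnval : ¬ Valid f θ := fun hv => hne (mv_all hρ hv hle)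
  have hnn : ∀ u, 0 ≤ θ u := by
    intro u
    by_cases hu : u = x
    · subst hu; rw [hθdef, Function.update_self]; linarith
    · rw [hθdef, Function.update_of_ne hu]; exact hρ.1.1 u
  rw [valid_def] at hnval
  push_neg at hnval
  obtain ⟨y, hyf, hylt⟩ := hnval hnn
  -- m := y x ≥ 1
  by_cases hm0 : y x = 0
  · exfalso
    have : SS θ y = SS ρ y := by
      refine SS_congr_on (fun r hr => ?_)
      have hrne : r ≠ x := by
        intro h; rw [h] at hr; exact (Finsupp.mem_support_iff.mp hr) hm0
      rw [hθdef, Function.update_of_ne hrne]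
    rw [this] at hylt
    exact absurd (valid_SS hρ.1 hyf) (not_le.mpr hylt)
  have hm1 : 1 ≤ y x := Nat.one_le_iff_ne_zero.mpr hm0
  set m := y x with hmdef
  have hmR : (1:ℝ) ≤ (m:ℝ) := by exact_mod_cast hm1
  have hSSθ : SS θ y = (ρ x - c) * (m:ℝ) + SS ρ (y.erase x) := by
    rw [hθdef, update_SS]
  have hSSρ : SS ρ y = ρ x * (m:ℝ) + SS ρ (y.erase x) := SS_erase ρ x y
  have hkey : SS ρ y < 1 + c * (m:ℝ) := by
    have : SS θ y < 1 := hylt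
    rw [hSSθ] at this; rw [hSSρ]; linarith
  -- lower bound via lemA and periodicity
  obtain ⟨z, hz⟩ := feas_sigy hyf
  have hsubρ : ∀ a b, ρ (a + b) ≤ ρ a + ρ b := mv_subadd hρ
  have hlemA := lemA (mv_zero hρ) hsubρ (y.erase x)
  have hsig : sigy (y.erase x) = (f - (m:ℝ) * x) + (z:ℝ) := by
    have := sigy_erase x y
    rw [hz] at this
    rw [← hmdef] at this
    linarith
  have hper : ρ (sigy (y.erase x)) = ρ (f - (m:ℝ) * x) := by
    rw [hsig]; exact mv_periodic hρ _ z
  have hlow1 : ρ (f - (m:ℝ) * x) ≤ SS ρ (y.erase x) := by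
    rw [← hper]; exact hlemA
  -- chain
  have hchain : ρ (f - x) ≤ ρ (f - (m:ℝ) * x) + ((m:ℝ) - 1) * ρ x := by
    have hmul := subadd_nmul (mv_zero hρ) hsubρ (m - 1) x
    have hcast : (((m - 1 : ℕ)):ℝ) = (m:ℝ) - 1 := by
      push_cast [Nat.cast_sub hm1]; ring
    rw [hcast] at hmul
    have hsplit : f - x = (f - (m:ℝ) * x) + ((m:ℝ) - 1) * x := by ring
    calc ρ (f - x) = ρ ((f - (m:ℝ) * x) + ((m:ℝ) - 1) * x) := by rw [← hsplit]
      _ ≤ ρ (f - (m:ℝ) * x) + ρ (((m:ℝ) - 1) * x) := hsubρ _ _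
      _ ≤ ρ (f - (m:ℝ) * x) + ((m:ℝ) - 1) * ρ x := by linarith
  have hlow2 : ρ x + ρ (f - x) ≤ SS ρ y := by
    rw [hSSρ]
    nlinarith
  -- m bound
  have hEnn : 0 ≤ SS ρ (y.erase x) := SS_nonneg hρ.1.1 _
  have hmbd : (m:ℝ) * ρ x < 1 + c * (m:ℝ) := by
    rw [hSSρ] at hkey; nlinarith
  have hmle : (m:ℝ) ≤ 2 / ρ x := by
    by_contra hcon
    push_neg at hcon
    have : 2 < (m:ℝ) * ρ x := by
      rw [div_lt_iff₀ hxpos] at hcon; linarith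
    nlinarith
  have hcm : c * (m:ℝ) ≤ η := by
    calc c * (m:ℝ) ≤ (η * ρ x / 2) * (2 / ρ x) := by
          apply mul_le_mul hcle2 hmle (by positivity) (by positivity)
      _ = η := by field_simp
  linarith

lemma valid_sym_min {f : ℝ} {θ : ℝ → ℝ} (hv : Valid f θ)
    (hs : ∀ x, θ x + θ (f - x) = 1) : MinimalValid f θ := by
  refine ⟨hv, ?_⟩
  rintro ⟨σ, hσv, hle, hne⟩
  obtain ⟨x₀, hx₀⟩ := Function.ne_iff.mp hne
  have hlt : σ x₀ < θ x₀ := lt_of_le_of_ne (hle x₀) hx₀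
  have h1 := valid_pair hσv x₀
  have h2 := hle (f - x₀)
  have h3 := hs x₀
  linarith
-- chunk E : consequences of Pset containment
section PC
variable {f : ℝ} {θ ρ : ℝ → ℝ}

lemma pair_mem_P (hθ : MinimalValid f θ) (x : ℝ) : pairy f x ∈ Pset f θ := by
  refine ⟨pairy_feas f x, ?_⟩
  show SS θ (pairy f x) = 1
  rw [SS_pairy]
  exact mv_sym hθ x

lemma rho_sym (hθ : MinimalValid f θ) (hP : Pset f θ ⊆ Pset f ρ) (x : ℝ) :
    ρ x + ρ (f - x) = 1 := by
  have := (hP (pair_mem_P hθ x)).2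
  rwa [show (∑ r ∈ (pairy f x).support, ρ r * (((pairy f x) r : ℕ) : ℝ)) = SS ρ (pairy f x)
    from rfl, SS_pairy] at this

lemma rho_min (hθ : MinimalValid f θ) (hρv : Valid f ρ) (hP : Pset f θ ⊆ Pset f ρ) :
    MinimalValid f ρ := valid_sym_min hρv (rho_sym hθ hP)

lemma nfy_mem_P (hθ : MinimalValid f θ) {x : ℝ} (hx : θ x = 0) (n : ℕ) :
    nfy f x n ∈ Pset f θ := by
  refine ⟨nfy_feas f x n, ?_⟩
  show SS θ (nfy f x n) = 1
  rw [SS_nfy, hx]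
  have h1 : θ ((n:ℝ) * x) ≤ 0 := by
    have := subadd_nmul (mv_zero hθ) (mv_subadd hθ) n x
    rw [hx] at this; simpa using this
  have h2 : θ ((n:ℝ) * x) = 0 := le_antisymm h1 (hθ.1.1 _)
  have h3 := mv_sym hθ ((n:ℝ) * x)
  rw [h2] at h3
  linarith

lemma zero_transfer (hθ : MinimalValid f θ) (hρv : Valid f ρ) (hP : Pset f θ ⊆ Pset f ρ)
    {x : ℝ} (hx : θ x = 0) : ρ x = 0 := by
  have hρm := rho_min hθ hρv hP
  by_contra hne
  have hpos : 0 < ρ x := lt_of_le_of_ne (hρv.1 x) (Ne.symm hne)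
  obtain ⟨n, hn⟩ := exists_nat_gt (1 / ρ x)
  have hyP := hP (nfy_mem_P hθ hx n)
  have hsum : (n:ℝ) * ρ x + ρ (f - (n:ℝ) * x) = 1 := by
    have := hyP.2
    rwa [show (∑ r ∈ (nfy f x n).support, ρ r * (((nfy f x n) r : ℕ) : ℝ))
      = SS ρ (nfy f x n) from rfl, SS_nfy] at this
  have hsym := rho_sym hθ hP ((n:ℝ) * x)
  -- so ρ (n x) = n ρ x ≤ 1
  have h1 : ρ ((n:ℝ) * x) = (n:ℝ) * ρ x := by linarith
  have h2 := mv_le_one hρm ((n:ℝ) * x)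
  rw [h1] at h2
  have : 1 / ρ x < (n:ℝ) := hn
  rw [div_lt_iff₀ hpos] at this
  linarith

/-- Δ operator -/
def Del (g : ℝ → ℝ) (a b : ℝ) : ℝ := g a + g b - g (a + b)

lemma tripy_mem_P (hθ : MinimalValid f θ) {a b : ℝ} (hab : Del θ a b = 0) :
    tripy f a b ∈ Pset f θ := by
  refine ⟨tripy_feas f a b, ?_⟩
  show SS θ (tripy f a b) = 1
  rw [SS_tripy]
  have h1 := mv_sym hθ (a + b)
  have h2 : f - a - b = f - (a + b) := by ring
  rw [h2]
  unfold Del at hab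
  linarith

lemma E_transfer (hθ : MinimalValid f θ) (hP : Pset f θ ⊆ Pset f ρ)
    {a b : ℝ} (hab : Del θ a b = 0) : Del ρ a b = 0 := by
  have := (hP (tripy_mem_P hθ hab)).2
  rw [show (∑ r ∈ (tripy f a b).support, ρ r * (((tripy f a b) r : ℕ) : ℝ))
    = SS ρ (tripy f a b) from rfl, SS_tripy] at this
  have hsym := rho_sym hθ hP (a + b)
  have h2 : f - a - b = f - (a + b) := by ring
  rw [h2] at this
  unfold Del
  linarith

lemma del_nonneg {ρ : ℝ → ℝ} (hsub : ∀ a b, ρ (a + b) ≤ ρ a + ρ b) (a b : ℝ) :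
    0 ≤ Del ρ a b := by
  have := hsub a b; unfold Del; linarith

lemma del_move {ρ : ℝ → ℝ} (hsub : ∀ a b, ρ (a + b) ≤ ρ a + ρ b) (a b h₁ h₂ : ℝ) :
    Del ρ a b ≤ Del ρ (a - h₁) (b - h₂) + ρ h₁ + ρ h₂ + ρ (-h₁ - h₂) := by
  have e1 : a = (a - h₁) + h₁ := by ring
  have e2 : b = (b - h₂) + h₂ := by ring
  have h3 : ρ a ≤ ρ (a - h₁) + ρ h₁ := by
    conv_lhs => rw [e1]
    exact hsub _ _
  have h4 : ρ b ≤ ρ (b - h₂) + ρ h₂ := by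
    conv_lhs => rw [e2]
    exact hsub _ _
  have e3 : (a - h₁) + (b - h₂) = (a + b) + (-h₁ - h₂) := by ring
  have h5 : ρ ((a - h₁) + (b - h₂)) ≤ ρ (a + b) + ρ (-h₁ - h₂) := by
    rw [e3]; exact hsub _ _
  unfold Del
  linarith

end PC

/-- abstract linear growth bound from local additivity + boundedness -/
lemma abstract_lin_bound {ψ : ℝ → ℝ} (hb : ∀ t, ψ t ≤ 1) (hnn : ∀ t, 0 ≤ ψ t)
    {d : ℝ} (hd : 0 < d)
    (hadd : ∀ u v, 0 < u → 0 < v → u + v ≤ d → ψ (u + v) = ψ u + ψ v) :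
    ∀ t, 0 < t → ψ t ≤ 2 / d * t := by
  intro t ht
  rcases le_or_gt t (d / 2) with h | h
  · set k := Nat.floor (d / t) with hkdef
    have hdt2 : (2:ℝ) ≤ d / t := by
      rw [le_div_iff₀ ht]; linarith
    have hk2 : 2 ≤ k := by
      rw [hkdef]
      exact Nat.le_floor (by exact_mod_cast hdt2)
    have hkR : (2:ℝ) ≤ (k:ℝ) := by exact_mod_cast hk2
    have hkpos : (0:ℝ) < (k:ℝ) := by linarith
    have hkle : (k:ℝ) * t ≤ d := by
      have h2 := Nat.floor_le (show (0:ℝ) ≤ d / t by positivity)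
      rw [← hkdef] at h2
      calc (k:ℝ) * t ≤ (d / t) * t := by nlinarith
        _ = d := by field_simp
    have hmul : ∀ j : ℕ, 1 ≤ j → j ≤ k → ψ ((j:ℝ) * t) = (j:ℝ) * ψ t := by
      intro j hj1 hjk
      induction j with
      | zero => omega
      | succ n ih =>
          by_cases hn0 : n = 0
          · subst hn0; norm_num
          · have hn1 : 1 ≤ n := Nat.one_le_iff_ne_zero.mpr hn0
            have hnk : n ≤ k := by omega
            have hrec := ih hn1 hnk
            have hargs : ((n:ℝ) + 1) * t = (n:ℝ) * t + t := by ring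
            have hle2 : (n:ℝ) * t + t ≤ d := by
              have hc : ((n:ℝ) + 1) ≤ (k:ℝ) := by exact_mod_cast hjk
              nlinarith
            have hA := hadd ((n:ℝ) * t) t (by positivity) ht hle2
            push_cast
            rw [hargs, hA, hrec]; ring
    have hψk : ψ ((k:ℝ) * t) = (k:ℝ) * ψ t := hmul k (by omega) le_rfl
    have hψk1 : (k:ℝ) * ψ t ≤ 1 := by rw [← hψk]; exact hb _
    have hklow : d / (2 * t) ≤ (k:ℝ) := by
      have hfl : d / t - 1 < (k:ℝ) := by
        rw [hkdef]
        exact_mod_cast Nat.sub_one_lt_floor (d / t)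
      have e2 : 1 ≤ d / (2 * t) := by
        rw [le_div_iff₀ (by positivity : (0:ℝ) < 2 * t)]; linarith
      have e : d / t - d / (2 * t) = d / (2 * t) := by field_simp; ring
      linarith
    have hψle : ψ t ≤ 1 / (k:ℝ) := by
      rw [le_div_iff₀ hkpos]; nlinarith
    have hfin : 1 / (k:ℝ) ≤ 2 / d * t := by
      rw [div_le_iff₀ hkpos]
      have hq : (2 / d * t) * (d / (2 * t)) = 1 := by field_simp
      nlinarith [mul_pos (show (0:ℝ) < 2 / d * t by positivity) ht]
    linarith
  · have h1 : 1 ≤ 2 / d * t := by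
      have e : 2 / d * t = 2 * t / d := by ring
      rw [e, le_div_iff₀ hd]; linarith
    calc ψ t ≤ 1 := hb t
      _ ≤ 2 / d * t := h1
-- chunk G : piecewise linear infrastructure
open scoped Classical
lemma discrete_closed_inter_finite {B : Set ℝ} (hBc : IsClosed B)
    (hBd : ∀ x ∈ B, ∃ ε > (0:ℝ), ∀ y ∈ B, |y - x| < ε → y = x) (lo hi : ℝ) :
    (B ∩ Set.Icc lo hi).Finite := by
  classical
  have hK : IsCompact (B ∩ Set.Icc lo hi) := (isCompact_Icc).inter_left hBc
  choose! ε hε0 hεsep using hBd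
  obtain ⟨t, htmem, htcov⟩ := hK.elim_nhds_subcover (fun x => Metric.ball x (ε x))
      (fun x hx => Metric.ball_mem_nhds _ (hε0 x hx.1))
  refine Set.Finite.subset t.finite_toSet ?_
  intro y hy
  have := htcov hy
  simp only [Set.mem_iUnion] at this
  obtain ⟨x, hxt, hxball⟩ := this
  have hxB : x ∈ B := (htmem x hxt).1
  have : |y - x| < ε x := by
    rw [← Real.dist_eq]; exact hxball
  have heq := hεsep x hxB y hy.1 this
  rw [heq]
  exact Finset.mem_coe.mpr hxt

noncomputable def Xfin (B : Set ℝ) : Finset ℝ :=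
  (if h : (B ∩ Set.Icc (-9:ℝ) 9).Finite then h.toFinset else ∅) ∪ {-9, 9}

lemma mem_Xfin_of {B : Set ℝ} (hfin : (B ∩ Set.Icc (-9:ℝ) 9).Finite)
    {x : ℝ} (hx : x ∈ B) (hx2 : x ∈ Set.Icc (-9:ℝ) 9) : x ∈ Xfin B := by
  unfold Xfin
  rw [dif_pos hfin]
  simp only [Finset.mem_union, Set.Finite.mem_toFinset]
  exact Or.inl ⟨hx, hx2⟩

lemma neg9_mem_Xfin (B : Set ℝ) : (-9:ℝ) ∈ Xfin B := by
  unfold Xfin; simp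

lemma nine_mem_Xfin (B : Set ℝ) : (9:ℝ) ∈ Xfin B := by
  unfold Xfin; simp

lemma Xfin_subset {B : Set ℝ} {x : ℝ} (hx : x ∈ Xfin B) : -9 ≤ x ∧ x ≤ 9 := by
  unfold Xfin at hx
  rcases Finset.mem_union.mp hx with h | h
  · split at h
    · simp only [Set.Finite.mem_toFinset] at h
      exact ⟨h.2.1, h.2.2⟩
    · simp at h
  · simp only [Finset.mem_insert, Finset.mem_singleton] at h
    rcases h with h | h <;> rw [h] <;> norm_num

noncomputable def cellLo (B : Set ℝ) (u : ℝ) : ℝ :=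
  if h : ((Xfin B).filter (fun t => t ≤ u)).Nonempty then ((Xfin B).filter (fun t => t ≤ u)).max' h
  else -9

noncomputable def cellHi (B : Set ℝ) (u : ℝ) : ℝ :=
  if h : ((Xfin B).filter (fun t => u ≤ t)).Nonempty then ((Xfin B).filter (fun t => u ≤ t)).min' h
  else 9

section cells
variable {B : Set ℝ} {u : ℝ}

lemma cell_ne_lo (hu9 : -9 ≤ u) : ((Xfin B).filter (fun t => t ≤ u)).Nonempty :=
  ⟨-9, Finset.mem_filter.mpr ⟨neg9_mem_Xfin B, hu9⟩⟩

lemma cell_ne_hi (hu9 : u ≤ 9) : ((Xfin B).filter (fun t => u ≤ t)).Nonempty :=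
  ⟨9, Finset.mem_filter.mpr ⟨nine_mem_Xfin B, hu9⟩⟩

lemma cellLo_mem (hu9 : -9 ≤ u) : cellLo B u ∈ Xfin B := by
  unfold cellLo
  rw [dif_pos (cell_ne_lo hu9)]
  exact (Finset.mem_filter.mp (Finset.max'_mem _ (cell_ne_lo hu9))).1

lemma cellHi_mem (hu9 : u ≤ 9) : cellHi B u ∈ Xfin B := by
  unfold cellHi
  rw [dif_pos (cell_ne_hi hu9)]
  exact (Finset.mem_filter.mp (Finset.min'_mem _ (cell_ne_hi hu9))).1

lemma cellLo_le (hu9 : -9 ≤ u) : cellLo B u ≤ u := by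
  unfold cellLo
  rw [dif_pos (cell_ne_lo hu9)]
  exact (Finset.mem_filter.mp (Finset.max'_mem _ (cell_ne_lo hu9))).2

lemma le_cellHi (hu9 : u ≤ 9) : u ≤ cellHi B u := by
  unfold cellHi
  rw [dif_pos (cell_ne_hi hu9)]
  exact (Finset.mem_filter.mp (Finset.min'_mem _ (cell_ne_hi hu9))).2

lemma cellLo_opt (hu9 : -9 ≤ u) {s : ℝ} (hs : s ∈ Xfin B) (hsu : s ≤ u) : s ≤ cellLo B u := by
  unfold cellLo
  rw [dif_pos (cell_ne_lo hu9)]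
  exact Finset.le_max' ((Xfin B).filter (fun t => t ≤ u)) s (Finset.mem_filter.mpr ⟨hs, hsu⟩)

lemma cellHi_opt (hu9 : u ≤ 9) {s : ℝ} (hs : s ∈ Xfin B) (hsu : u ≤ s) : cellHi B u ≤ s := by
  unfold cellHi
  rw [dif_pos (cell_ne_hi hu9)]
  exact Finset.min'_le ((Xfin B).filter (fun t => u ≤ t)) s (Finset.mem_filter.mpr ⟨hs, hsu⟩)

lemma cell_no_bp (hfin : (B ∩ Set.Icc (-9:ℝ) 9).Finite) (hu9 : -9 ≤ u) (hu9' : u ≤ 9)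
    {v : ℝ} (hv : v ∈ B) : v ∉ Set.Ioo (cellLo B u) (cellHi B u) := by
  rintro ⟨h1, h2⟩
  have hv9 : v ∈ Set.Icc (-9:ℝ) 9 := by
    constructor
    · have := (Xfin_subset (cellLo_mem (B := B) hu9)).1; linarith
    · have := (Xfin_subset (cellHi_mem (B := B) hu9')).2; linarith
  have hvX : v ∈ Xfin B := mem_Xfin_of hfin hv hv9
  rcases le_or_gt v u with h | h
  · exact absurd (cellLo_opt hu9 hvX h) (not_le.mpr h1)
  · exact absurd (cellHi_opt hu9' hvX (le_of_lt h)) (not_le.mpr h2)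

end cells

lemma affine_of_no_bp {θ : ℝ → ℝ} {B : Set ℝ}
    (hBaff : ∀ x ∉ B, ∃ a b : ℝ, ∀ z ∈ connectedComponentIn Bᶜ x, θ z = a * z + b)
    (hθc : Continuous θ) {l h : ℝ} (hlh : l ≤ h)
    (hno : ∀ v ∈ B, v ∉ Set.Ioo l h) :
    ∃ a b : ℝ, ∀ z ∈ Set.Icc l h, θ z = a * z + b := by
  rcases eq_or_lt_of_le hlh with heq | hlt
  · subst heq
    exact ⟨0, θ l, fun z hz => by
      have : z = l := le_antisymm hz.2 hz.1
      rw [this]; ring⟩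
  · set x₀ := (l + h) / 2 with hx₀
    have hx₀mem : x₀ ∈ Set.Ioo l h := by constructor <;> (rw [hx₀]; linarith)
    have hx₀B : x₀ ∉ B := fun hc => (hno x₀ hc) hx₀mem
    obtain ⟨a, b, hab⟩ := hBaff x₀ hx₀B
    have hsub : Set.Ioo l h ⊆ connectedComponentIn Bᶜ x₀ := by
      refine IsPreconnected.subset_connectedComponentIn isPreconnected_Ioo hx₀mem ?_
      intro z hz hzB
      exact (hno z hzB) hz
    have hIoo : ∀ z ∈ Set.Ioo l h, θ z = a * z + b := fun z hz => hab z (hsub hz)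
    refine ⟨a, b, fun z hz => ?_⟩
    have hcl : Set.Icc l h ⊆ {w | θ w = a * w + b} := by
      have h1 : closure (Set.Ioo l h) = Set.Icc l h := closure_Ioo (ne_of_lt hlt)
      rw [← h1]
      refine closure_minimal hIoo ?_
      exact isClosed_eq hθc (by continuity)
    exact hcl hz

/-- chosen affine data on an interval -/
noncomputable def pcab (θ : ℝ → ℝ) (l h : ℝ) : ℝ × ℝ :=
  if hex : ∃ ab : ℝ × ℝ, ∀ z ∈ Set.Icc l h, θ z = ab.1 * z + ab.2 then hex.choose else (0, 0)

lemma pcab_spec {θ : ℝ → ℝ} {l h : ℝ} (hex : ∃ a b : ℝ, ∀ z ∈ Set.Icc l h, θ z = a * z + b) :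
    ∀ z ∈ Set.Icc l h, θ z = (pcab θ l h).1 * z + (pcab θ l h).2 := by
  obtain ⟨a, b, hab⟩ := hex
  have hex' : ∃ ab : ℝ × ℝ, ∀ z ∈ Set.Icc l h, θ z = ab.1 * z + ab.2 := ⟨(a, b), hab⟩
  unfold pcab
  rw [dif_pos hex']
  exact hex'.choose_spec
-- chunk H : near-zero linear growth of ρ, Lipschitz bounds
noncomputable def dpos (B : Set ℝ) : ℝ :=
  if h : ((Xfin B).filter (fun t => 0 < t)).Nonempty then ((Xfin B).filter (fun t => 0 < t)).min' h
  else 9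

noncomputable def dneg (B : Set ℝ) : ℝ :=
  if h : ((Xfin B).filter (fun t => t < 0)).Nonempty then ((Xfin B).filter (fun t => t < 0)).max' h
  else -9

section nearzero
variable {B : Set ℝ}

lemma dpos_ne : ((Xfin B).filter (fun t => (0:ℝ) < t)).Nonempty :=
  ⟨9, Finset.mem_filter.mpr ⟨nine_mem_Xfin B, by norm_num⟩⟩

lemma dneg_ne : ((Xfin B).filter (fun t => t < (0:ℝ))).Nonempty :=
  ⟨-9, Finset.mem_filter.mpr ⟨neg9_mem_Xfin B, by norm_num⟩⟩

lemma dpos_pos : 0 < dpos B := by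
  unfold dpos
  rw [dif_pos dpos_ne]
  exact (Finset.mem_filter.mp (Finset.min'_mem _ dpos_ne)).2

lemma dneg_neg : dneg B < 0 := by
  unfold dneg
  rw [dif_pos dneg_ne]
  exact (Finset.mem_filter.mp (Finset.max'_mem _ dneg_ne)).2

lemma dpos_le9 : dpos B ≤ 9 := by
  unfold dpos
  rw [dif_pos dpos_ne]
  exact Finset.min'_le _ 9 (Finset.mem_filter.mpr ⟨nine_mem_Xfin B, by norm_num⟩)

lemma dneg_ge9 : -9 ≤ dneg B := by
  unfold dneg
  rw [dif_pos dneg_ne]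
  exact Finset.le_max' _ (-9) (Finset.mem_filter.mpr ⟨neg9_mem_Xfin B, by norm_num⟩)

lemma dpos_no_bp (hfin : (B ∩ Set.Icc (-9:ℝ) 9).Finite) {v : ℝ} (hv : v ∈ B) :
    v ∉ Set.Ioo 0 (dpos B) := by
  rintro ⟨h1, h2⟩
  have hv9 : v ∈ Set.Icc (-9:ℝ) 9 := ⟨by linarith, by linarith [dpos_le9 (B := B)]⟩
  have hvX : v ∈ Xfin B := mem_Xfin_of hfin hv hv9
  have : dpos B ≤ v := by
    unfold dpos
    rw [dif_pos dpos_ne]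
    exact Finset.min'_le _ v (Finset.mem_filter.mpr ⟨hvX, h1⟩)
  linarith

lemma dneg_no_bp (hfin : (B ∩ Set.Icc (-9:ℝ) 9).Finite) {v : ℝ} (hv : v ∈ B) :
    v ∉ Set.Ioo (dneg B) 0 := by
  rintro ⟨h1, h2⟩
  have hv9 : v ∈ Set.Icc (-9:ℝ) 9 := ⟨by linarith [dneg_ge9 (B := B)], by linarith⟩
  have hvX : v ∈ Xfin B := mem_Xfin_of hfin hv hv9
  have : v ≤ dneg B := by
    unfold dneg
    rw [dif_pos dneg_ne]
    exact Finset.le_max' ((Xfin B).filter (fun t => t < 0)) v (Finset.mem_filter.mpr ⟨hvX, h2⟩)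
  linarith

end nearzero

section rhogrowth
variable {f : ℝ} {θ ρ : ℝ → ℝ} {B : Set ℝ}

/-- additivity of θ near zero, positive side -/
lemma theta_add_pos (hθ : MinimalValid f θ)
    (hfin : (B ∩ Set.Icc (-9:ℝ) 9).Finite)
    (hBaff : ∀ x ∉ B, ∃ a b : ℝ, ∀ z ∈ connectedComponentIn Bᶜ x, θ z = a * z + b)
    (hθc : Continuous θ) :
    ∀ u v : ℝ, 0 < u → 0 < v → u + v ≤ dpos B → θ (u + v) = θ u + θ v := by
  obtain ⟨a, b, hab⟩ := affine_of_no_bp hBaff hθc (le_of_lt (dpos_pos (B := B)))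
    (fun w hw hmem => dpos_no_bp hfin hw hmem)
  intro u v hu hv huv
  have hd := dpos_pos (B := B)
  have h0 : θ 0 = a * 0 + b := hab 0 ⟨le_refl 0, le_of_lt hd⟩
  rw [mv_zero hθ] at h0
  have hb : b = 0 := by linarith
  have h1 : θ u = a * u + b := hab u ⟨le_of_lt hu, by linarith⟩
  have h2 : θ v = a * v + b := hab v ⟨le_of_lt hv, by linarith⟩
  have h3 : θ (u + v) = a * (u + v) + b := hab (u + v) ⟨by linarith, huv⟩
  rw [h1, h2, h3, hb]; ring

lemma theta_add_neg (hθ : MinimalValid f θ)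
    (hfin : (B ∩ Set.Icc (-9:ℝ) 9).Finite)
    (hBaff : ∀ x ∉ B, ∃ a b : ℝ, ∀ z ∈ connectedComponentIn Bᶜ x, θ z = a * z + b)
    (hθc : Continuous θ) :
    ∀ u v : ℝ, 0 < u → 0 < v → u + v ≤ -(dneg B) → θ (-(u + v)) = θ (-u) + θ (-v) := by
  obtain ⟨a, b, hab⟩ := affine_of_no_bp hBaff hθc (le_of_lt (dneg_neg (B := B)))
    (fun w hw hmem => dneg_no_bp hfin hw hmem)
  intro u v hu hv huv
  have hd := dneg_neg (B := B)
  have h0 : θ 0 = a * 0 + b := hab 0 ⟨le_of_lt hd, le_refl 0⟩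
  rw [mv_zero hθ] at h0
  have hb : b = 0 := by linarith
  have h1 : θ (-u) = a * (-u) + b := hab (-u) ⟨by linarith, by linarith⟩
  have h2 : θ (-v) = a * (-v) + b := hab (-v) ⟨by linarith, by linarith⟩
  have h3 : θ (-(u + v)) = a * (-(u + v)) + b := hab (-(u + v)) ⟨by linarith, by linarith⟩
  rw [h1, h2, h3, hb]; ring

/-- growth bound for any valid ρ whose Pset contains Pset θ -/
lemma rho_growth (hθ : MinimalValid f θ)
    (hfin : (B ∩ Set.Icc (-9:ℝ) 9).Finite)
    (hBaff : ∀ x ∉ B, ∃ a b : ℝ, ∀ z ∈ connectedComponentIn Bᶜ x, θ z = a * z + b)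
    (hθc : Continuous θ)
    (hρv : Valid f ρ) (hP : Pset f θ ⊆ Pset f ρ) :
    ∃ C : ℝ, 0 < C ∧ ∀ t : ℝ, ρ t ≤ C * |t| := by
  have hρm := rho_min hθ hρv hP
  have hρ1 : ∀ t, ρ t ≤ 1 := mv_le_one hρm
  have hρ0 : ∀ t, 0 ≤ ρ t := hρv.1
  set dp := dpos B with hdp
  set dn := -(dneg B) with hdn
  have hdp0 : 0 < dp := dpos_pos
  have hdn0 : 0 < dn := by rw [hdn]; linarith [dneg_neg (B := B)]
  have haddp := theta_add_pos hθ hfin hBaff hθc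
  have haddn := theta_add_neg hθ hfin hBaff hθc
  have hp : ∀ t, 0 < t → ρ t ≤ 2 / dp * t := by
    refine abstract_lin_bound hρ1 hρ0 hdp0 (fun u v hu hv huv => ?_)
    have hDθ : Del θ u v = 0 := by
      unfold Del
      rw [haddp u v hu hv huv]; ring
    have := E_transfer hθ hP hDθ
    unfold Del at this; linarith
  have hn : ∀ t, 0 < t → ρ (-t) ≤ 2 / dn * t := by
    refine abstract_lin_bound (ψ := fun t => ρ (-t)) (fun t => hρ1 _) (fun t => hρ0 _)
      hdn0 (fun u v hu hv huv => ?_)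
    have hDθ : Del θ (-u) (-v) = 0 := by
      unfold Del
      have := haddn u v hu hv huv
      have he : (-u) + (-v) = -(u + v) := by ring
      rw [he, this]; ring
    have := E_transfer hθ hP hDθ
    unfold Del at this
    have he : (-u) + (-v) = -(u + v) := by ring
    rw [he] at this
    linarith
  refine ⟨2 / dp + 2 / dn, by positivity, fun t => ?_⟩
  rcases lt_trichotomy t 0 with h | h | h
  · have := hn (-t) (by linarith)
    rw [neg_neg] at this
    rw [abs_of_neg h]
    nlinarith [div_pos (show (0:ℝ) < 2 by norm_num) hdp0]
  · rw [h]
    simp [mv_zero hρm]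
  · have := hp t h
    rw [abs_of_pos h]
    nlinarith [div_pos (show (0:ℝ) < 2 by norm_num) hdn0]

lemma rho_lip_of_growth {C : ℝ} (hρm : MinimalValid f ρ)
    (hC : ∀ t : ℝ, ρ t ≤ C * |t|) :
    ∀ x x' : ℝ, |ρ x - ρ x'| ≤ C * |x - x'| := by
  intro x x'
  have hsub := mv_subadd hρm
  have h1 : ρ x ≤ ρ x' + ρ (x - x') := by
    have := hsub x' (x - x')
    have he : x' + (x - x') = x := by ring
    rwa [he] at this
  have h2 : ρ x' ≤ ρ x + ρ (x' - x) := by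
    have := hsub x (x' - x)
    have he : x + (x' - x) = x' := by ring
    rwa [he] at this
  have h3 := hC (x - x')
  have h4 := hC (x' - x)
  rw [abs_sub_comm x' x] at h4
  rw [abs_le]
  constructor <;> linarith

lemma cont_of_lip {g : ℝ → ℝ} {C : ℝ} (hC : 0 ≤ C)
    (h : ∀ x x', |g x - g x'| ≤ C * |x - x'|) : Continuous g := by
  have hL : LipschitzWith (Real.toNNReal C) g := by
    refine LipschitzWith.of_dist_le_mul (fun x y => ?_)
    rw [Real.dist_eq, Real.dist_eq]
    have := h x y
    rwa [Real.coe_toNNReal C hC]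
  exact hL.continuous
-- chunk I1 : list minimum helpers, segment coefficients, cell geometry
lemma foldr_min_le (l : List ℝ) (x : ℝ) (hx : x ∈ l) (s : ℝ) : l.foldr min s ≤ x := by
  induction l with
  | nil => simp at hx
  | cons y t ih =>
      rcases List.mem_cons.mp hx with h | h
      · subst h; exact min_le_left _ _
      · exact le_trans (min_le_right _ _) (ih h)

lemma foldr_min_pos (l : List ℝ) (hl : ∀ x ∈ l, 0 < x) (s : ℝ) (hs : 0 < s) :
    0 < l.foldr min s := by
  induction l with
  | nil => simpa
  | cons y t ih =>
      simp only [List.foldr_cons]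
      exact lt_min (hl y (by simp)) (ih (fun x hx => hl x (by simp [hx])))

noncomputable def mposfun (l : List ℝ) : ℝ := (l.filter (fun x => 0 < x)).foldr min 1

lemma mposfun_pos (l : List ℝ) : 0 < mposfun l := by
  unfold mposfun
  refine foldr_min_pos _ (fun x hx => ?_) 1 one_pos
  have := List.of_mem_filter hx
  simpa using this

lemma mposfun_le {l : List ℝ} {x : ℝ} (hx : x ∈ l) (hpos : 0 < x) : mposfun l ≤ x := by
  unfold mposfun
  refine foldr_min_le _ x ?_ 1
  exact List.mem_filter.mpr ⟨hx, by simpa using hpos⟩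

lemma seg_coeff {l u x : ℝ} (h1 : l ≤ x) (h2 : x ≤ u) :
    ∃ μ : ℝ, 0 ≤ μ ∧ μ ≤ 1 ∧ x = (1 - μ) * l + μ * u := by
  rcases eq_or_lt_of_le (le_trans h1 h2) with he | hlt
  · exact ⟨0, le_refl 0, zero_le_one, by rw [← he] at h2; nlinarith⟩
  · refine ⟨(x - l) / (u - l), div_nonneg (by linarith) (by linarith), ?_, ?_⟩
    · rw [div_le_one (by linarith)]; linarith
    · have hne : u - l ≠ 0 := ne_of_gt (by linarith)
      have h4 : (x - l) / (u - l) * (u - l) = x - l := div_mul_cancel₀ _ hne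
      nlinarith [h4]

/-- membership in the (possibly degenerate) cell polytope -/
def inT (α₁ α₂ β₁ β₂ γ₁ γ₂ : ℝ) (w : ℝ × ℝ) : Prop :=
  α₁ ≤ w.1 ∧ w.1 ≤ α₂ ∧ β₁ ≤ w.2 ∧ w.2 ≤ β₂ ∧ γ₁ ≤ w.1 + w.2 ∧ w.1 + w.2 ≤ γ₂

/-- the twelve candidate vertices of a cell -/
def candL (α₁ α₂ β₁ β₂ γ₁ γ₂ : ℝ) : List (ℝ × ℝ) :=
  [(α₁, β₁), (α₁, β₂), (α₂, β₁), (α₂, β₂),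
   (α₁, γ₁ - α₁), (α₁, γ₂ - α₁), (α₂, γ₁ - α₂), (α₂, γ₂ - α₂),
   (γ₁ - β₁, β₁), (γ₁ - β₂, β₂), (γ₂ - β₁, β₁), (γ₂ - β₂, β₂)]

section slides
variable {α₁ α₂ β₁ β₂ γ₁ γ₂ : ℝ}

/-- slide along a vertical edge x = A (A one of α₁, α₂) -/
lemma slide_vert {A y : ℝ} (hA : A = α₁ ∨ A = α₂) (hw : inT α₁ α₂ β₁ β₂ γ₁ γ₂ (A, y)) :
    ∃ v₁ v₂ : ℝ × ℝ, ∃ ν : ℝ,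
      v₁ ∈ candL α₁ α₂ β₁ β₂ γ₁ γ₂ ∧ v₂ ∈ candL α₁ α₂ β₁ β₂ γ₁ γ₂ ∧
      inT α₁ α₂ β₁ β₂ γ₁ γ₂ v₁ ∧ inT α₁ α₂ β₁ β₂ γ₁ γ₂ v₂ ∧
      0 ≤ ν ∧ ν ≤ 1 ∧ A = (1 - ν) * v₁.1 + ν * v₂.1 ∧ y = (1 - ν) * v₁.2 + ν * v₂.2 := by
  obtain ⟨hx1, hx2, hy1, hy2, hs1, hs2⟩ := hw
  simp only at hx1 hx2 hy1 hy2 hs1 hs2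
  set L := max β₁ (γ₁ - A) with hL
  set U := min β₂ (γ₂ - A) with hU
  have hLy : L ≤ y := max_le hy1 (by linarith)
  have hyU : y ≤ U := le_min hy2 (by linarith)
  obtain ⟨ν, hν0, hν1, hνeq⟩ := seg_coeff hLy hyU
  have hv1T : inT α₁ α₂ β₁ β₂ γ₁ γ₂ (A, L) := by
    refine ⟨hx1, hx2, le_max_left _ _, le_trans hLy hy2, ?_, ?_⟩
    · simp only; have : γ₁ - A ≤ L := le_max_right _ _; linarith
    · simp only; have : L ≤ y := hLy; linarith
  have hv2T : inT α₁ α₂ β₁ β₂ γ₁ γ₂ (A, U) := by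
    refine ⟨hx1, hx2, le_trans hy1 hyU, min_le_left _ _, ?_, ?_⟩
    · simp only; have : y ≤ U := hyU; linarith
    · simp only; have : U ≤ γ₂ - A := min_le_right _ _; linarith
  have hv1C : (A, L) ∈ candL α₁ α₂ β₁ β₂ γ₁ γ₂ := by
    rcases max_cases β₁ (γ₁ - A) with ⟨he, _⟩ | ⟨he, _⟩ <;> rw [hL, he] <;>
      rcases hA with h | h <;> subst h <;> simp [candL]
  have hv2C : (A, U) ∈ candL α₁ α₂ β₁ β₂ γ₁ γ₂ := by
    rcases min_cases β₂ (γ₂ - A) with ⟨he, _⟩ | ⟨he, _⟩ <;> rw [hU, he] <;>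
      rcases hA with h | h <;> subst h <;> simp [candL]
  exact ⟨(A, L), (A, U), ν, hv1C, hv2C, hv1T, hv2T, hν0, hν1, by simp; ring, hνeq⟩

/-- slide along a diagonal edge x + y = G (G one of γ₁, γ₂) -/
lemma slide_diag {G y : ℝ} (hG : G = γ₁ ∨ G = γ₂) (hw : inT α₁ α₂ β₁ β₂ γ₁ γ₂ (G - y, y)) :
    ∃ v₁ v₂ : ℝ × ℝ, ∃ ν : ℝ,
      v₁ ∈ candL α₁ α₂ β₁ β₂ γ₁ γ₂ ∧ v₂ ∈ candL α₁ α₂ β₁ β₂ γ₁ γ₂ ∧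
      inT α₁ α₂ β₁ β₂ γ₁ γ₂ v₁ ∧ inT α₁ α₂ β₁ β₂ γ₁ γ₂ v₂ ∧
      0 ≤ ν ∧ ν ≤ 1 ∧ G - y = (1 - ν) * v₁.1 + ν * v₂.1 ∧ y = (1 - ν) * v₁.2 + ν * v₂.2 := by
  obtain ⟨hx1, hx2, hy1, hy2, hs1, hs2⟩ := hw
  simp only at hx1 hx2 hy1 hy2 hs1 hs2
  set L := max β₁ (G - α₂) with hL
  set U := min β₂ (G - α₁) with hU
  have hLy : L ≤ y := max_le hy1 (by linarith)
  have hyU : y ≤ U := le_min hy2 (by linarith)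
  obtain ⟨ν, hν0, hν1, hνeq⟩ := seg_coeff hLy hyU
  have hGs : γ₁ ≤ G ∧ G ≤ γ₂ := by
    have h : G - y + y = G := by ring
    rw [h] at hs1 hs2
    exact ⟨hs1, hs2⟩
  have hv1T : inT α₁ α₂ β₁ β₂ γ₁ γ₂ (G - L, L) := by
    refine ⟨?_, ?_, le_max_left _ _, le_trans hLy hy2, ?_, ?_⟩
    · simp only; have : L ≤ y := hLy; linarith
    · simp only; have : G - α₂ ≤ L := le_max_right _ _; linarith
    · simp only; have : G - L + L = G := by ring
      rw [this]; exact hGs.1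
    · simp only; have : G - L + L = G := by ring
      rw [this]; exact hGs.2
  have hv2T : inT α₁ α₂ β₁ β₂ γ₁ γ₂ (G - U, U) := by
    refine ⟨?_, ?_, le_trans hy1 hyU, min_le_left _ _, ?_, ?_⟩
    · simp only; have : U ≤ G - α₁ := min_le_right _ _; linarith
    · simp only; have : y ≤ U := hyU; linarith
    · simp only; have : G - U + U = G := by ring
      rw [this]; exact hGs.1
    · simp only; have : G - U + U = G := by ring
      rw [this]; exact hGs.2
  have hv1C : (G - L, L) ∈ candL α₁ α₂ β₁ β₂ γ₁ γ₂ := by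
    rcases max_cases β₁ (G - α₂) with ⟨he, _⟩ | ⟨he, _⟩ <;> rw [hL, he] <;>
      rcases hG with h | h <;> subst h <;> simp [candL]
  have hv2C : (G - U, U) ∈ candL α₁ α₂ β₁ β₂ γ₁ γ₂ := by
    rcases min_cases β₂ (G - α₁) with ⟨he, _⟩ | ⟨he, _⟩ <;> rw [hU, he] <;>
      rcases hG with h | h <;> subst h <;> simp [candL]
  refine ⟨(G - L, L), (G - U, U), ν, hv1C, hv2C, hv1T, hv2T, hν0, hν1, ?_, hνeq⟩
  simp only
  rw [hνeq]; ring
end slides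
-- chunk I2 : the main 4-point decomposition
lemma slide_main {α₁ α₂ β₁ β₂ γ₁ γ₂ a b : ℝ} (hp : inT α₁ α₂ β₁ β₂ γ₁ γ₂ (a, b)) :
    ∃ v₁ v₂ v₃ v₄ : ℝ × ℝ, ∃ l₁ l₂ l₃ l₄ : ℝ,
      (v₁ ∈ candL α₁ α₂ β₁ β₂ γ₁ γ₂ ∧ inT α₁ α₂ β₁ β₂ γ₁ γ₂ v₁) ∧
      (v₂ ∈ candL α₁ α₂ β₁ β₂ γ₁ γ₂ ∧ inT α₁ α₂ β₁ β₂ γ₁ γ₂ v₂) ∧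
      (v₃ ∈ candL α₁ α₂ β₁ β₂ γ₁ γ₂ ∧ inT α₁ α₂ β₁ β₂ γ₁ γ₂ v₃) ∧
      (v₄ ∈ candL α₁ α₂ β₁ β₂ γ₁ γ₂ ∧ inT α₁ α₂ β₁ β₂ γ₁ γ₂ v₄) ∧
      0 ≤ l₁ ∧ 0 ≤ l₂ ∧ 0 ≤ l₃ ∧ 0 ≤ l₄ ∧ l₁ + l₂ + l₃ + l₄ = 1 ∧
      a = l₁ * v₁.1 + l₂ * v₂.1 + l₃ * v₃.1 + l₄ * v₄.1 ∧
      b = l₁ * v₁.2 + l₂ * v₂.2 + l₃ * v₃.2 + l₄ * v₄.2 := by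
  obtain ⟨hx1, hx2, hy1, hy2, hs1, hs2⟩ := hp
  simp only at hx1 hx2 hy1 hy2 hs1 hs2
  set L := max α₁ (γ₁ - b) with hLdef
  set U := min α₂ (γ₂ - b) with hUdef
  have hLa : L ≤ a := max_le hx1 (by linarith)
  have haU : a ≤ U := le_min hx2 (by linarith)
  obtain ⟨μ, hμ0, hμ1, hμeq⟩ := seg_coeff hLa haU
  -- left point
  have hleft : ∃ v₁ v₂ : ℝ × ℝ, ∃ ν : ℝ,
      v₁ ∈ candL α₁ α₂ β₁ β₂ γ₁ γ₂ ∧ v₂ ∈ candL α₁ α₂ β₁ β₂ γ₁ γ₂ ∧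
      inT α₁ α₂ β₁ β₂ γ₁ γ₂ v₁ ∧ inT α₁ α₂ β₁ β₂ γ₁ γ₂ v₂ ∧
      0 ≤ ν ∧ ν ≤ 1 ∧ L = (1 - ν) * v₁.1 + ν * v₂.1 ∧ b = (1 - ν) * v₁.2 + ν * v₂.2 := by
    rcases max_cases α₁ (γ₁ - b) with ⟨he, hge⟩ | ⟨he, hge⟩
    · have hT : inT α₁ α₂ β₁ β₂ γ₁ γ₂ (α₁, b) :=
        ⟨le_refl _, le_trans hx1 hx2, hy1, hy2, by simp only; linarith, by simp only; linarith⟩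
      obtain ⟨v₁, v₂, ν, hc1, hc2, ht1, ht2, h0, h1, hA, hB⟩ := slide_vert (Or.inl rfl) hT
      exact ⟨v₁, v₂, ν, hc1, hc2, ht1, ht2, h0, h1, by rw [hLdef, he]; exact hA, hB⟩
    · have hT : inT α₁ α₂ β₁ β₂ γ₁ γ₂ (γ₁ - b, b) := by
        refine ⟨by simp only; linarith, by simp only; linarith, hy1, hy2, ?_, ?_⟩
        · simp only; have : γ₁ - b + b = γ₁ := by ring
          rw [this]
        · simp only; have : γ₁ - b + b = γ₁ := by ring
          rw [this]; linarith
      obtain ⟨v₁, v₂, ν, hc1, hc2, ht1, ht2, h0, h1, hA, hB⟩ := slide_diag (Or.inl rfl) hT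
      exact ⟨v₁, v₂, ν, hc1, hc2, ht1, ht2, h0, h1, by rw [hLdef, he]; exact hA, hB⟩
  have hright : ∃ v₃ v₄ : ℝ × ℝ, ∃ ν : ℝ,
      v₃ ∈ candL α₁ α₂ β₁ β₂ γ₁ γ₂ ∧ v₄ ∈ candL α₁ α₂ β₁ β₂ γ₁ γ₂ ∧
      inT α₁ α₂ β₁ β₂ γ₁ γ₂ v₃ ∧ inT α₁ α₂ β₁ β₂ γ₁ γ₂ v₄ ∧
      0 ≤ ν ∧ ν ≤ 1 ∧ U = (1 - ν) * v₃.1 + ν * v₄.1 ∧ b = (1 - ν) * v₃.2 + ν * v₄.2 := by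
    rcases min_cases α₂ (γ₂ - b) with ⟨he, hge⟩ | ⟨he, hge⟩
    · have hT : inT α₁ α₂ β₁ β₂ γ₁ γ₂ (α₂, b) :=
        ⟨le_trans hx1 hx2, le_refl _, hy1, hy2, by simp only; linarith, by simp only; linarith⟩
      obtain ⟨v₃, v₄, ν, hc1, hc2, ht1, ht2, h0, h1, hA, hB⟩ := slide_vert (Or.inr rfl) hT
      exact ⟨v₃, v₄, ν, hc1, hc2, ht1, ht2, h0, h1, by rw [hUdef, he]; exact hA, hB⟩
    · have hT : inT α₁ α₂ β₁ β₂ γ₁ γ₂ (γ₂ - b, b) := by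
        refine ⟨by simp only; linarith, by simp only; linarith, hy1, hy2, ?_, ?_⟩
        · simp only; have : γ₂ - b + b = γ₂ := by ring
          rw [this]; linarith
        · simp only; have : γ₂ - b + b = γ₂ := by ring
          rw [this]
      obtain ⟨v₃, v₄, ν, hc1, hc2, ht1, ht2, h0, h1, hA, hB⟩ := slide_diag (Or.inr rfl) hT
      exact ⟨v₃, v₄, ν, hc1, hc2, ht1, ht2, h0, h1, by rw [hUdef, he]; exact hA, hB⟩
  obtain ⟨v₁, v₂, ν₁, hc1, hc2, ht1, ht2, hν₁0, hν₁1, hL1, hb1⟩ := hleft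
  obtain ⟨v₃, v₄, ν₂, hc3, hc4, ht3, ht4, hν₂0, hν₂1, hU1, hb2⟩ := hright
  refine ⟨v₁, v₂, v₃, v₄, (1 - μ) * (1 - ν₁), (1 - μ) * ν₁, μ * (1 - ν₂), μ * ν₂,
    ⟨hc1, ht1⟩, ⟨hc2, ht2⟩, ⟨hc3, ht3⟩, ⟨hc4, ht4⟩,
    mul_nonneg (by linarith) (by linarith), mul_nonneg (by linarith) hν₁0,
    mul_nonneg hμ0 (by linarith), mul_nonneg hμ0 hν₂0, by ring, ?_, ?_⟩
  · rw [hμeq, hL1, hU1]; ring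
  · linear_combination (1 - μ) * hb1 + μ * hb2
-- chunk I3 : per-cell affine data and the global Hoffman constant
noncomputable def gval (θ : ℝ → ℝ) (t : ℝ×ℝ×ℝ×ℝ×ℝ×ℝ) (w : ℝ × ℝ) : ℝ :=
  ((pcab θ t.1 t.2.1).1 - (pcab θ t.2.2.2.2.1 t.2.2.2.2.2).1) * w.1 +
  ((pcab θ t.2.2.1 t.2.2.2.1).1 - (pcab θ t.2.2.2.2.1 t.2.2.2.2.2).1) * w.2 +
  ((pcab θ t.1 t.2.1).2 + (pcab θ t.2.2.1 t.2.2.2.1).2 - (pcab θ t.2.2.2.2.1 t.2.2.2.2.2).2)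

def candT (t : ℝ×ℝ×ℝ×ℝ×ℝ×ℝ) : List (ℝ × ℝ) :=
  candL t.1 t.2.1 t.2.2.1 t.2.2.2.1 t.2.2.2.2.1 t.2.2.2.2.2

noncomputable def mcell (θ : ℝ → ℝ) (t : ℝ×ℝ×ℝ×ℝ×ℝ×ℝ) : ℝ :=
  mposfun ((candT t).map (gval θ t))

noncomputable def cellC (θ : ℝ → ℝ) (t : ℝ×ℝ×ℝ×ℝ×ℝ×ℝ) : ℝ := 100 / mcell θ t

lemma mcell_pos (θ : ℝ → ℝ) (t : ℝ×ℝ×ℝ×ℝ×ℝ×ℝ) : 0 < mcell θ t := mposfun_pos _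

lemma cellC_pos (θ : ℝ → ℝ) (t : ℝ×ℝ×ℝ×ℝ×ℝ×ℝ) : 0 < cellC θ t :=
  div_pos (by norm_num) (mcell_pos θ t)

noncomputable def tupSet (B : Set ℝ) : Finset (ℝ×ℝ×ℝ×ℝ×ℝ×ℝ) :=
  Xfin B ×ˢ (Xfin B ×ˢ (Xfin B ×ˢ (Xfin B ×ˢ (Xfin B ×ˢ Xfin B))))

lemma tupSet_ne (B : Set ℝ) : (tupSet B).Nonempty := by
  refine ⟨(9, 9, 9, 9, 9, 9), ?_⟩
  simp [tupSet, Finset.mem_product, nine_mem_Xfin]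

lemma mem_tupSet {B : Set ℝ} {t : ℝ×ℝ×ℝ×ℝ×ℝ×ℝ}
    (h1 : t.1 ∈ Xfin B) (h2 : t.2.1 ∈ Xfin B) (h3 : t.2.2.1 ∈ Xfin B)
    (h4 : t.2.2.2.1 ∈ Xfin B) (h5 : t.2.2.2.2.1 ∈ Xfin B) (h6 : t.2.2.2.2.2 ∈ Xfin B) :
    t ∈ tupSet B := by
  obtain ⟨a1, a2, b1, b2, c1, c2⟩ := t
  simp only [tupSet, Finset.mem_product]
  exact ⟨h1, h2, h3, h4, h5, h6⟩

noncomputable def CHc (θ : ℝ → ℝ) (B : Set ℝ) : ℝ :=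
  ((tupSet B).image (cellC θ)).max' ((tupSet_ne B).image _)

lemma CHc_ge {θ : ℝ → ℝ} {B : Set ℝ} {t : ℝ×ℝ×ℝ×ℝ×ℝ×ℝ} (ht : t ∈ tupSet B) :
    cellC θ t ≤ CHc θ B :=
  Finset.le_max' _ _ (Finset.mem_image_of_mem _ ht)

lemma CHc_pos (θ : ℝ → ℝ) (B : Set ℝ) : 0 < CHc θ B := by
  have h := CHc_ge (θ := θ) (tupSet_ne B).choose_spec
  exact lt_of_lt_of_le (cellC_pos _ _) h

lemma abs_add4 (x1 x2 x3 x4 : ℝ) : |x1 + x2 + x3 + x4| ≤ |x1| + |x2| + |x3| + |x4| := by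
  calc |x1 + x2 + x3 + x4| ≤ |x1 + x2 + x3| + |x4| := abs_add_le _ _
    _ ≤ |x1 + x2| + |x3| + |x4| := by linarith [abs_add_le (x1 + x2) x3]
    _ ≤ |x1| + |x2| + |x3| + |x4| := by linarith [abs_add_le x1 x2]
-- chunk I4 : the two-dimensional Hoffman bound
lemma hoffman2 {f : ℝ} {θ : ℝ → ℝ} {B : Set ℝ}
    (hθ : MinimalValid f θ)
    (hfin : (B ∩ Set.Icc (-9:ℝ) 9).Finite)
    (hBaff : ∀ x ∉ B, ∃ a b : ℝ, ∀ z ∈ connectedComponentIn Bᶜ x, θ z = a * z + b)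
    (hθc : Continuous θ)
    {a b : ℝ} (ha0 : 0 ≤ a) (ha1 : a ≤ 1) (hb0 : 0 ≤ b) (hb1 : b ≤ 1) :
    ∃ q : ℝ × ℝ, Del θ q.1 q.2 = 0 ∧
      |a - q.1| + |b - q.2| + |a + b - (q.1 + q.2)| ≤ CHc θ B * Del θ a b := by
  have ha9 : -9 ≤ a := by linarith
  have ha9' : a ≤ 9 := by linarith
  have hb9 : -9 ≤ b := by linarith
  have hb9' : b ≤ 9 := by linarith
  have hs9 : -9 ≤ a + b := by linarith
  have hs9' : a + b ≤ 9 := by linarith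
  set α₁ := cellLo B a with hα₁def
  set α₂ := cellHi B a with hα₂def
  set β₁ := cellLo B b with hβ₁def
  set β₂ := cellHi B b with hβ₂def
  set γ₁ := cellLo B (a + b) with hγ₁def
  set γ₂ := cellHi B (a + b) with hγ₂def
  have hα : α₁ ≤ α₂ := le_trans (cellLo_le ha9) (le_cellHi ha9')
  have hβ : β₁ ≤ β₂ := le_trans (cellLo_le hb9) (le_cellHi hb9')
  have hγ : γ₁ ≤ γ₂ := le_trans (cellLo_le hs9) (le_cellHi hs9')
  have hα₁9 : -9 ≤ α₁ := (Xfin_subset (cellLo_mem ha9)).1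
  have hα₂9 : α₂ ≤ 9 := (Xfin_subset (cellHi_mem ha9')).2
  have hβ₁9 : -9 ≤ β₁ := (Xfin_subset (cellLo_mem hb9)).1
  have hβ₂9 : β₂ ≤ 9 := (Xfin_subset (cellHi_mem hb9')).2
  have hIaff := pcab_spec (θ := θ) (l := α₁) (h := α₂)
    (affine_of_no_bp hBaff hθc hα (fun v hv => cell_no_bp hfin ha9 ha9' hv))
  have hJaff := pcab_spec (θ := θ) (l := β₁) (h := β₂)
    (affine_of_no_bp hBaff hθc hβ (fun v hv => cell_no_bp hfin hb9 hb9' hv))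
  have hKaff := pcab_spec (θ := θ) (l := γ₁) (h := γ₂)
    (affine_of_no_bp hBaff hθc hγ (fun v hv => cell_no_bp hfin hs9 hs9' hv))
  set t : ℝ×ℝ×ℝ×ℝ×ℝ×ℝ := (α₁, α₂, β₁, β₂, γ₁, γ₂) with htdef
  have ht : t ∈ tupSet B :=
    mem_tupSet (cellLo_mem ha9) (cellHi_mem ha9') (cellLo_mem hb9) (cellHi_mem hb9')
      (cellLo_mem hs9) (cellHi_mem hs9')
  set GA := (pcab θ α₁ α₂).1 - (pcab θ γ₁ γ₂).1 with hGA
  set GB := (pcab θ β₁ β₂).1 - (pcab θ γ₁ γ₂).1 with hGB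
  set GC := (pcab θ α₁ α₂).2 + (pcab θ β₁ β₂).2 - (pcab θ γ₁ γ₂).2 with hGC
  have hgdef : ∀ w : ℝ × ℝ, gval θ t w = GA * w.1 + GB * w.2 + GC := fun w => rfl
  have hg_eq : ∀ w : ℝ × ℝ, inT α₁ α₂ β₁ β₂ γ₁ γ₂ w → gval θ t w = Del θ w.1 w.2 := by
    rintro w ⟨h1, h2, h3, h4, h5, h6⟩
    have e1 := hIaff w.1 ⟨h1, h2⟩
    have e2 := hJaff w.2 ⟨h3, h4⟩
    have e3 := hKaff (w.1 + w.2) ⟨h5, h6⟩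
    rw [hgdef w]
    unfold Del
    rw [e1, e2, e3, hGA, hGB, hGC]; ring
  have hp : inT α₁ α₂ β₁ β₂ γ₁ γ₂ (a, b) :=
    ⟨cellLo_le ha9, le_cellHi ha9', cellLo_le hb9, le_cellHi hb9',
      cellLo_le hs9, le_cellHi hs9'⟩
  obtain ⟨v₁, v₂, v₃, v₄, l₁, l₂, l₃, l₄, ⟨hC1, hT1⟩, ⟨hC2, hT2⟩, ⟨hC3, hT3⟩, ⟨hC4, hT4⟩,
    hl1, hl2, hl3, hl4, hlsum, hA, hB⟩ := slide_main hp
  set m := mcell θ t with hmdef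
  have hm0 : 0 < m := mcell_pos θ t
  have hcellC : cellC θ t = 100 / m := rfl
  have hDel0 := del_nonneg (mv_subadd hθ)
  have hDelp : Del θ a b =
      l₁ * Del θ v₁.1 v₁.2 + l₂ * Del θ v₂.1 v₂.2 + l₃ * Del θ v₃.1 v₃.2 + l₄ * Del θ v₄.1 v₄.2 := by
    rw [← hg_eq (a, b) hp, ← hg_eq v₁ hT1, ← hg_eq v₂ hT2, ← hg_eq v₃ hT3, ← hg_eq v₄ hT4]
    simp only [hgdef]
    linear_combination GA * hA + GB * hB - GC * hlsum
  have hmem_map : ∀ v : ℝ × ℝ, v ∈ candL α₁ α₂ β₁ β₂ γ₁ γ₂ →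
      gval θ t v ∈ (candT t).map (gval θ t) := by
    intro v hv
    exact List.mem_map_of_mem hv
  have hCH := CHc_ge (θ := θ) ht
  rw [hcellC] at hCH
  have hcoordv : ∀ w : ℝ × ℝ, inT α₁ α₂ β₁ β₂ γ₁ γ₂ w →
      -9 ≤ w.1 ∧ w.1 ≤ 9 ∧ -9 ≤ w.2 ∧ w.2 ≤ 9 := by
    rintro w ⟨h1, h2, h3, h4, _, _⟩
    exact ⟨by linarith, by linarith, by linarith, by linarith⟩
  by_cases hz : ∃ w : ℝ × ℝ, inT α₁ α₂ β₁ β₂ γ₁ γ₂ w ∧ Del θ w.1 w.2 = 0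
  · obtain ⟨q0, hq0T, hq0D⟩ := hz
    have hpick : ∀ v : ℝ × ℝ, v ∈ candL α₁ α₂ β₁ β₂ γ₁ γ₂ → inT α₁ α₂ β₁ β₂ γ₁ γ₂ v →
        ∃ w : ℝ × ℝ, inT α₁ α₂ β₁ β₂ γ₁ γ₂ w ∧ Del θ w.1 w.2 = 0 ∧
          |v.1 - w.1| + |v.2 - w.2| + |v.1 + v.2 - (w.1 + w.2)| ≤ 100 / m * Del θ v.1 v.2 := by
      intro v hvC hvT
      by_cases hv0 : Del θ v.1 v.2 = 0
      · refine ⟨v, hvT, hv0, ?_⟩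
        rw [hv0]
        simp
      · have hvpos : 0 < Del θ v.1 v.2 := lt_of_le_of_ne (hDel0 _ _) (Ne.symm hv0)
        have hmle : m ≤ Del θ v.1 v.2 := by
          have h1 := hmem_map v hvC
          have h2 := mposfun_le h1 (by rw [hg_eq v hvT]; exact hvpos)
          rw [hg_eq v hvT] at h2
          exact h2
        refine ⟨q0, hq0T, hq0D, ?_⟩
        have hcv := hcoordv v hvT
        have hcq := hcoordv q0 hq0T
        have h100 : 100 ≤ 100 / m * Del θ v.1 v.2 := by
          rw [div_mul_eq_mul_div, le_div_iff₀ hm0]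
          nlinarith
        have e1 : |v.1 - q0.1| ≤ 18 := abs_le.mpr ⟨by linarith, by linarith⟩
        have e2 : |v.2 - q0.2| ≤ 18 := abs_le.mpr ⟨by linarith, by linarith⟩
        have e3 : |v.1 + v.2 - (q0.1 + q0.2)| ≤ 36 := abs_le.mpr ⟨by linarith, by linarith⟩
        linarith
    obtain ⟨w₁, hw1T, hw1D, hw1b⟩ := hpick v₁ hC1 hT1
    obtain ⟨w₂, hw2T, hw2D, hw2b⟩ := hpick v₂ hC2 hT2
    obtain ⟨w₃, hw3T, hw3D, hw3b⟩ := hpick v₃ hC3 hT3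
    obtain ⟨w₄, hw4T, hw4D, hw4b⟩ := hpick v₄ hC4 hT4
    set qx := l₁ * w₁.1 + l₂ * w₂.1 + l₃ * w₃.1 + l₄ * w₄.1 with hqx
    set qy := l₁ * w₁.2 + l₂ * w₂.2 + l₃ * w₃.2 + l₄ * w₄.2 with hqy
    have hqT : inT α₁ α₂ β₁ β₂ γ₁ γ₂ (qx, qy) := by
      obtain ⟨a1, a2, a3, a4, a5, a6⟩ := hw1T
      obtain ⟨b1', b2', b3', b4', b5', b6'⟩ := hw2T
      obtain ⟨c1, c2, c3, c4, c5, c6⟩ := hw3T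
      obtain ⟨d1, d2, d3, d4, d5, d6⟩ := hw4T
      have s1 : ∀ r : ℝ, l₁ * r + l₂ * r + l₃ * r + l₄ * r = r := by
        intro r; linear_combination r * hlsum
      have brs : ∀ u v : ℝ×ℝ, True := fun _ _ => trivial
      have br1 : l₁ * (w₁.1 + w₁.2) = l₁ * w₁.1 + l₁ * w₁.2 := by ring
      have br2 : l₂ * (w₂.1 + w₂.2) = l₂ * w₂.1 + l₂ * w₂.2 := by ring
      have br3 : l₃ * (w₃.1 + w₃.2) = l₃ * w₃.1 + l₃ * w₃.2 := by ring
      have br4 : l₄ * (w₄.1 + w₄.2) = l₄ * w₄.1 + l₄ * w₄.2 := by ring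
      refine ⟨?_, ?_, ?_, ?_, ?_, ?_⟩ <;> simp only [hqx, hqy]
      · have p1 := mul_le_mul_of_nonneg_left a1 hl1
        have p2 := mul_le_mul_of_nonneg_left b1' hl2
        have p3 := mul_le_mul_of_nonneg_left c1 hl3
        have p4 := mul_le_mul_of_nonneg_left d1 hl4
        linarith [s1 α₁]
      · have p1 := mul_le_mul_of_nonneg_left a2 hl1
        have p2 := mul_le_mul_of_nonneg_left b2' hl2
        have p3 := mul_le_mul_of_nonneg_left c2 hl3
        have p4 := mul_le_mul_of_nonneg_left d2 hl4
        linarith [s1 α₂]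
      · have p1 := mul_le_mul_of_nonneg_left a3 hl1
        have p2 := mul_le_mul_of_nonneg_left b3' hl2
        have p3 := mul_le_mul_of_nonneg_left c3 hl3
        have p4 := mul_le_mul_of_nonneg_left d3 hl4
        linarith [s1 β₁]
      · have p1 := mul_le_mul_of_nonneg_left a4 hl1
        have p2 := mul_le_mul_of_nonneg_left b4' hl2
        have p3 := mul_le_mul_of_nonneg_left c4 hl3
        have p4 := mul_le_mul_of_nonneg_left d4 hl4
        linarith [s1 β₂]
      · have p1 := mul_le_mul_of_nonneg_left a5 hl1
        have p2 := mul_le_mul_of_nonneg_left b5' hl2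
        have p3 := mul_le_mul_of_nonneg_left c5 hl3
        have p4 := mul_le_mul_of_nonneg_left d5 hl4
        linarith [s1 γ₁, br1, br2, br3, br4]
      · have p1 := mul_le_mul_of_nonneg_left a6 hl1
        have p2 := mul_le_mul_of_nonneg_left b6' hl2
        have p3 := mul_le_mul_of_nonneg_left c6 hl3
        have p4 := mul_le_mul_of_nonneg_left d6 hl4
        linarith [s1 γ₂, br1, br2, br3, br4]
    have hqD : Del θ qx qy = 0 := by
      have h1 : Del θ qx qy = gval θ t (qx, qy) := (hg_eq (qx, qy) hqT).symm
      rw [h1]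
      have h2 : gval θ t (qx, qy) =
          l₁ * gval θ t w₁ + l₂ * gval θ t w₂ + l₃ * gval θ t w₃ + l₄ * gval θ t w₄ := by
        simp only [hgdef]
        simp only [hqx, hqy]
        linear_combination (- GC) * hlsum
      rw [h2, hg_eq w₁ hw1T, hg_eq w₂ hw2T, hg_eq w₃ hw3T, hg_eq w₄ hw4T,
        hw1D, hw2D, hw3D, hw4D]
      ring
    refine ⟨(qx, qy), hqD, ?_⟩
    simp only
    have habs1 : |a - qx| ≤ l₁ * |v₁.1 - w₁.1| + l₂ * |v₂.1 - w₂.1| + l₃ * |v₃.1 - w₃.1|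
        + l₄ * |v₄.1 - w₄.1| := by
      have e : a - qx = l₁ * (v₁.1 - w₁.1) + l₂ * (v₂.1 - w₂.1) + l₃ * (v₃.1 - w₃.1)
          + l₄ * (v₄.1 - w₄.1) := by
        rw [hA, hqx]; ring
      rw [e]
      calc |l₁ * (v₁.1 - w₁.1) + l₂ * (v₂.1 - w₂.1) + l₃ * (v₃.1 - w₃.1) + l₄ * (v₄.1 - w₄.1)|
          ≤ |l₁ * (v₁.1 - w₁.1)| + |l₂ * (v₂.1 - w₂.1)| + |l₃ * (v₃.1 - w₃.1)|
            + |l₄ * (v₄.1 - w₄.1)| := abs_add4 _ _ _ _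
        _ = l₁ * |v₁.1 - w₁.1| + l₂ * |v₂.1 - w₂.1| + l₃ * |v₃.1 - w₃.1|
            + l₄ * |v₄.1 - w₄.1| := by
            rw [abs_mul, abs_mul, abs_mul, abs_mul, abs_of_nonneg hl1, abs_of_nonneg hl2,
              abs_of_nonneg hl3, abs_of_nonneg hl4]
    have habs2 : |b - qy| ≤ l₁ * |v₁.2 - w₁.2| + l₂ * |v₂.2 - w₂.2| + l₃ * |v₃.2 - w₃.2|
        + l₄ * |v₄.2 - w₄.2| := by
      have e : b - qy = l₁ * (v₁.2 - w₁.2) + l₂ * (v₂.2 - w₂.2) + l₃ * (v₃.2 - w₃.2)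
          + l₄ * (v₄.2 - w₄.2) := by
        rw [hB, hqy]; ring
      rw [e]
      calc |l₁ * (v₁.2 - w₁.2) + l₂ * (v₂.2 - w₂.2) + l₃ * (v₃.2 - w₃.2) + l₄ * (v₄.2 - w₄.2)|
          ≤ |l₁ * (v₁.2 - w₁.2)| + |l₂ * (v₂.2 - w₂.2)| + |l₃ * (v₃.2 - w₃.2)|
            + |l₄ * (v₄.2 - w₄.2)| := abs_add4 _ _ _ _
        _ = l₁ * |v₁.2 - w₁.2| + l₂ * |v₂.2 - w₂.2| + l₃ * |v₃.2 - w₃.2|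
            + l₄ * |v₄.2 - w₄.2| := by
            rw [abs_mul, abs_mul, abs_mul, abs_mul, abs_of_nonneg hl1, abs_of_nonneg hl2,
              abs_of_nonneg hl3, abs_of_nonneg hl4]
    have habs3 : |a + b - (qx + qy)| ≤ l₁ * |v₁.1 + v₁.2 - (w₁.1 + w₁.2)|
        + l₂ * |v₂.1 + v₂.2 - (w₂.1 + w₂.2)| + l₃ * |v₃.1 + v₃.2 - (w₃.1 + w₃.2)|
        + l₄ * |v₄.1 + v₄.2 - (w₄.1 + w₄.2)| := by
      have e : a + b - (qx + qy) = l₁ * (v₁.1 + v₁.2 - (w₁.1 + w₁.2))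
          + l₂ * (v₂.1 + v₂.2 - (w₂.1 + w₂.2)) + l₃ * (v₃.1 + v₃.2 - (w₃.1 + w₃.2))
          + l₄ * (v₄.1 + v₄.2 - (w₄.1 + w₄.2)) := by
        rw [hA, hB, hqx, hqy]; ring
      rw [e]
      calc |l₁ * (v₁.1 + v₁.2 - (w₁.1 + w₁.2)) + l₂ * (v₂.1 + v₂.2 - (w₂.1 + w₂.2))
            + l₃ * (v₃.1 + v₃.2 - (w₃.1 + w₃.2)) + l₄ * (v₄.1 + v₄.2 - (w₄.1 + w₄.2))|
          ≤ |l₁ * (v₁.1 + v₁.2 - (w₁.1 + w₁.2))| + |l₂ * (v₂.1 + v₂.2 - (w₂.1 + w₂.2))|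
            + |l₃ * (v₃.1 + v₃.2 - (w₃.1 + w₃.2))| + |l₄ * (v₄.1 + v₄.2 - (w₄.1 + w₄.2))| :=
          abs_add4 _ _ _ _
        _ = l₁ * |v₁.1 + v₁.2 - (w₁.1 + w₁.2)| + l₂ * |v₂.1 + v₂.2 - (w₂.1 + w₂.2)|
            + l₃ * |v₃.1 + v₃.2 - (w₃.1 + w₃.2)| + l₄ * |v₄.1 + v₄.2 - (w₄.1 + w₄.2)| := by
            rw [abs_mul, abs_mul, abs_mul, abs_mul, abs_of_nonneg hl1, abs_of_nonneg hl2,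
              abs_of_nonneg hl3, abs_of_nonneg hl4]
    have hsum1 := mul_le_mul_of_nonneg_left hw1b hl1
    have hsum2 := mul_le_mul_of_nonneg_left hw2b hl2
    have hsum3 := mul_le_mul_of_nonneg_left hw3b hl3
    have hsum4 := mul_le_mul_of_nonneg_left hw4b hl4
    have hfinal : |a - qx| + |b - qy| + |a + b - (qx + qy)| ≤ 100 / m * Del θ a b := by
      have e : 100 / m * Del θ a b =
          l₁ * (100 / m * Del θ v₁.1 v₁.2) + l₂ * (100 / m * Del θ v₂.1 v₂.2)
          + l₃ * (100 / m * Del θ v₃.1 v₃.2) + l₄ * (100 / m * Del θ v₄.1 v₄.2) := by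
        rw [hDelp]; ring
      have f1 : l₁ * (|v₁.1 - w₁.1| + |v₁.2 - w₁.2| + |v₁.1 + v₁.2 - (w₁.1 + w₁.2)|)
          = l₁ * |v₁.1 - w₁.1| + l₁ * |v₁.2 - w₁.2| + l₁ * |v₁.1 + v₁.2 - (w₁.1 + w₁.2)| := by ring
      have f2 : l₂ * (|v₂.1 - w₂.1| + |v₂.2 - w₂.2| + |v₂.1 + v₂.2 - (w₂.1 + w₂.2)|)
          = l₂ * |v₂.1 - w₂.1| + l₂ * |v₂.2 - w₂.2| + l₂ * |v₂.1 + v₂.2 - (w₂.1 + w₂.2)| := by ring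
      have f3 : l₃ * (|v₃.1 - w₃.1| + |v₃.2 - w₃.2| + |v₃.1 + v₃.2 - (w₃.1 + w₃.2)|)
          = l₃ * |v₃.1 - w₃.1| + l₃ * |v₃.2 - w₃.2| + l₃ * |v₃.1 + v₃.2 - (w₃.1 + w₃.2)| := by ring
      have f4 : l₄ * (|v₄.1 - w₄.1| + |v₄.2 - w₄.2| + |v₄.1 + v₄.2 - (w₄.1 + w₄.2)|)
          = l₄ * |v₄.1 - w₄.1| + l₄ * |v₄.2 - w₄.2| + l₄ * |v₄.1 + v₄.2 - (w₄.1 + w₄.2)| := by ring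
      linarith [habs1, habs2, habs3, hsum1, hsum2, hsum3, hsum4, e, f1, f2, f3, f4]
    have hCHm : 100 / m * Del θ a b ≤ CHc θ B * Del θ a b :=
      mul_le_mul_of_nonneg_right hCH (hDel0 a b)
    linarith
  · push_neg at hz
    refine ⟨(0, a + b), ?_, ?_⟩
    · show Del θ 0 (a + b) = 0
      unfold Del
      rw [mv_zero hθ, zero_add]
      ring
    · simp only
      have he : |a - 0| + |b - (a + b)| + |a + b - (0 + (a + b))| = 2 * a := by
        rw [sub_zero, abs_of_nonneg ha0]
        have e1 : b - (a + b) = -a := by ring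
        have e2 : a + b - (0 + (a + b)) = 0 := by ring
        rw [e1, e2, abs_neg, abs_of_nonneg ha0, abs_zero]
        ring
      rw [he]
      have hge : ∀ v : ℝ × ℝ, v ∈ candL α₁ α₂ β₁ β₂ γ₁ γ₂ → inT α₁ α₂ β₁ β₂ γ₁ γ₂ v →
          m ≤ Del θ v.1 v.2 := by
        intro v hvC hvT
        have hvpos : 0 < Del θ v.1 v.2 :=
          lt_of_le_of_ne (hDel0 _ _) (Ne.symm (hz v hvT))
        have h1 := hmem_map v hvC
        have h2 := mposfun_le h1 (by rw [hg_eq v hvT]; exact hvpos)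
        rw [hg_eq v hvT] at h2
        exact h2
      have hm1 := hge v₁ hC1 hT1
      have hm2 := hge v₂ hC2 hT2
      have hm3 := hge v₃ hC3 hT3
      have hm4 := hge v₄ hC4 hT4
      have hDm : m ≤ Del θ a b := by
        have p1 := mul_le_mul_of_nonneg_left hm1 hl1
        have p2 := mul_le_mul_of_nonneg_left hm2 hl2
        have p3 := mul_le_mul_of_nonneg_left hm3 hl3
        have p4 := mul_le_mul_of_nonneg_left hm4 hl4
        have s1 : l₁ * m + l₂ * m + l₃ * m + l₄ * m = m := by linear_combination m * hlsum
        rw [hDelp]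
        linarith
      have h100 : (100:ℝ) = (100 / m) * m := by field_simp
      have hprod : (100 / m) * m ≤ CHc θ B * Del θ a b := by
        apply mul_le_mul hCH hDm (le_of_lt hm0)
        linarith [CHc_pos θ B]
      linarith
-- chunk J : Del comparison, 1-D pointwise comparison, and the core lemma
section COMPARE
variable {f : ℝ} {θ ρ : ℝ → ℝ} {B : Set ℝ}

lemma del_periodic {ρ : ℝ → ℝ} (hρm : MinimalValid f ρ) (a b : ℝ) :
    Del ρ a b = Del ρ (Int.fract a) (Int.fract b) := by
  unfold Del
  have h1 : ρ (Int.fract a + ⌊a⌋) = ρ (Int.fract a) := mv_periodic hρm _ _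
  have h2 : ρ (Int.fract b + ⌊b⌋) = ρ (Int.fract b) := mv_periodic hρm _ _
  have h3 : ρ (Int.fract a + Int.fract b + (⌊a⌋ + ⌊b⌋ : ℤ)) = ρ (Int.fract a + Int.fract b) :=
    mv_periodic hρm _ _
  have e1 : Int.fract a + (⌊a⌋ : ℝ) = a := Int.fract_add_floor a
  have e2 : Int.fract b + (⌊b⌋ : ℝ) = b := Int.fract_add_floor b
  have e3 : Int.fract a + Int.fract b + ((⌊a⌋ + ⌊b⌋ : ℤ) : ℝ) = a + b := by
    push_cast; linarith
  rw [e1] at h1; rw [e2] at h2; rw [e3] at h3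
  rw [← h1, ← h2, ← h3]

lemma del_compare (hθ : MinimalValid f θ)
    (hfin : (B ∩ Set.Icc (-9:ℝ) 9).Finite)
    (hBaff : ∀ x ∉ B, ∃ a b : ℝ, ∀ z ∈ connectedComponentIn Bᶜ x, θ z = a * z + b)
    (hθc : Continuous θ)
    (hρv : Valid f ρ) (hP : Pset f θ ⊆ Pset f ρ) :
    ∃ C2 : ℝ, 0 < C2 ∧ ∀ a b : ℝ, Del ρ a b ≤ C2 * Del θ a b := by
  obtain ⟨C0, hC0, hgrow⟩ := rho_growth hθ hfin hBaff hθc hρv hP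
  have hρm := rho_min hθ hρv hP
  have hCH := CHc_pos θ B
  refine ⟨C0 * CHc θ B, by positivity, fun a b => ?_⟩
  rw [del_periodic hρm a b, del_periodic hθ a b]
  set a' := Int.fract a with ha'
  set b' := Int.fract b with hb'
  have ha0 : 0 ≤ a' := Int.fract_nonneg a
  have ha1 : a' ≤ 1 := le_of_lt (Int.fract_lt_one a)
  have hb0 : 0 ≤ b' := Int.fract_nonneg b
  have hb1 : b' ≤ 1 := le_of_lt (Int.fract_lt_one b)
  obtain ⟨q, hq0, hqb⟩ := hoffman2 hθ hfin hBaff hθc ha0 ha1 hb0 hb1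
  have hmove := del_move (mv_subadd hρm) a' b' (a' - q.1) (b' - q.2)
  have e1 : a' - (a' - q.1) = q.1 := by ring
  have e2 : b' - (b' - q.2) = q.2 := by ring
  rw [e1, e2] at hmove
  have hq : Del ρ q.1 q.2 = 0 := E_transfer hθ hP hq0
  have g1 := hgrow (a' - q.1)
  have g2 := hgrow (b' - q.2)
  have g3 := hgrow (-(a' - q.1) - (b' - q.2))
  have e3 : |-(a' - q.1) - (b' - q.2)| = |a' + b' - (q.1 + q.2)| := by
    rw [show -(a' - q.1) - (b' - q.2) = -(a' + b' - (q.1 + q.2)) by ring, abs_neg]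
  rw [e3] at g3
  have hC0CH : C0 * (|a' - q.1| + |b' - q.2| + |a' + b' - (q.1 + q.2)|)
      ≤ C0 * (CHc θ B * Del θ a' b') := mul_le_mul_of_nonneg_left hqb (le_of_lt hC0)
  rw [hq] at hmove
  have : C0 * (CHc θ B * Del θ a' b') = C0 * CHc θ B * Del θ a' b' := by ring
  linarith

/-- 1-D per-cell constant -/
noncomputable def cell1C (θ : ℝ → ℝ) (t : ℝ × ℝ) : ℝ :=
  max (if (pcab θ t.1 t.2).1 = 0 then 1 else 1 / |(pcab θ t.1 t.2).1|)
    (max (if min (θ t.1) (θ t.2) ≤ 0 then 1 else 2 / min (θ t.1) (θ t.2)) 1)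

noncomputable def KH (θ : ℝ → ℝ) (B : Set ℝ) : ℝ :=
  ((Xfin B ×ˢ Xfin B).image (cell1C θ)).max'
    (((Finset.nonempty_product).mpr ⟨⟨9, nine_mem_Xfin B⟩, ⟨9, nine_mem_Xfin B⟩⟩).image _)

lemma KH_ge {t : ℝ × ℝ} (ht : t ∈ Xfin B ×ˢ Xfin B) : cell1C θ t ≤ KH θ B :=
  Finset.le_max' _ _ (Finset.mem_image_of_mem _ ht)

lemma cell1C_ge_one (θ : ℝ → ℝ) (t : ℝ × ℝ) : 1 ≤ cell1C θ t :=
  le_trans (le_max_right _ _) (le_max_right _ _)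

lemma KH_pos : 0 < KH θ B :=
  lt_of_lt_of_le one_pos (le_trans (cell1C_ge_one θ _)
    (KH_ge (Finset.mk_mem_product (nine_mem_Xfin B) (nine_mem_Xfin B))))

lemma hoffman1 (hθ : MinimalValid f θ)
    (hfin : (B ∩ Set.Icc (-9:ℝ) 9).Finite)
    (hBaff : ∀ x ∉ B, ∃ a b : ℝ, ∀ z ∈ connectedComponentIn Bᶜ x, θ z = a * z + b)
    (hθc : Continuous θ)
    {x : ℝ} (hx0 : 0 ≤ x) (hx1 : x ≤ 1) :
    ∃ x' : ℝ, θ x' = 0 ∧ |x - x'| ≤ KH θ B * θ x := by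
  have hx9 : -9 ≤ x := by linarith
  have hx9' : x ≤ 9 := by linarith
  set l := cellLo B x with hldef
  set h := cellHi B x with hhdef
  have hlh : l ≤ h := le_trans (cellLo_le hx9) (le_cellHi hx9')
  have haff := pcab_spec (θ := θ) (l := l) (h := h)
    (affine_of_no_bp hBaff hθc hlh (fun v hv => cell_no_bp hfin hx9 hx9' hv))
  set c := (pcab θ l h).1 with hcdef
  set d := (pcab θ l h).2 with hddef
  have ht : (l, h) ∈ Xfin B ×ˢ Xfin B :=
    Finset.mk_mem_product (cellLo_mem hx9) (cellHi_mem hx9')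
  have hKH := KH_ge (θ := θ) ht
  have hθx0 : 0 ≤ θ x := hθ.1.1 x
  have hxmem : x ∈ Set.Icc l h := ⟨cellLo_le hx9, le_cellHi hx9'⟩
  by_cases hz : ∃ x' ∈ Set.Icc l h, θ x' = 0
  · obtain ⟨x', hx'mem, hx'0⟩ := hz
    by_cases hc : c = 0
    · have hθxd : θ x = d := by
        have h' := haff x hxmem
        rw [hc] at h'
        simpa using h'
      have hθx'd : θ x' = d := by
        have h' := haff x' hx'mem
        rw [hc] at h'
        simpa using h'
      have hx0' : θ x = 0 := by rw [hθxd, ← hθx'd, hx'0]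
      refine ⟨x, hx0', ?_⟩
      rw [sub_self, abs_zero, hx0', mul_zero]
    · refine ⟨x', hx'0, ?_⟩
      have e1 : θ x = c * x + d := haff x hxmem
      have e2 : (0:ℝ) = c * x' + d := by rw [← hx'0]; exact haff x' hx'mem
      have e3 : θ x = c * (x - x') := by rw [e1]; linarith [e2]
      have hcabs : (0:ℝ) < |c| := abs_pos.mpr hc
      have e4 : |c| * |x - x'| = θ x := by
        rw [← abs_mul, ← e3, abs_of_nonneg hθx0]
      have hcell : 1 / |c| ≤ cell1C θ (l, h) := by
        have he : cell1C θ (l, h) = max (if c = 0 then 1 else 1 / |c|)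
            (max (if min (θ l) (θ h) ≤ 0 then 1 else 2 / min (θ l) (θ h)) 1) := rfl
        rw [he, if_neg hc]
        exact le_max_left _ _
      have h1c : 1 / |c| ≤ KH θ B := le_trans hcell hKH
      have e5 : (1 / |c|) * θ x = |x - x'| := by
        rw [← e4]
        field_simp
      rw [← e5]
      exact mul_le_mul_of_nonneg_right h1c hθx0
  · push_neg at hz
    set mv := min (θ l) (θ h) with hmv
    have hθl : 0 < θ l := lt_of_le_of_ne (hθ.1.1 l) (Ne.symm (hz l ⟨le_refl l, hlh⟩))
    have hθh : 0 < θ h := lt_of_le_of_ne (hθ.1.1 h) (Ne.symm (hz h ⟨hlh, le_refl h⟩))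
    have hmv0 : 0 < mv := lt_min hθl hθh
    have hθxmv : mv ≤ θ x := by
      obtain ⟨μ, hμ0, hμ1, hμeq⟩ := seg_coeff hxmem.1 hxmem.2
      have e1 : θ x = c * x + d := haff x hxmem
      have e2 : θ l = c * l + d := haff l ⟨le_refl l, hlh⟩
      have e3 : θ h = c * h + d := haff h ⟨hlh, le_refl h⟩
      have e4 : θ x = (1 - μ) * θ l + μ * θ h := by
        rw [e1, e2, e3, hμeq]; ring
      have h5 : mv ≤ θ l := min_le_left _ _
      have h6 : mv ≤ θ h := min_le_right _ _
      rw [e4]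
      nlinarith
    refine ⟨0, mv_zero hθ, ?_⟩
    rw [sub_zero, abs_of_nonneg hx0]
    have hcell : 2 / mv ≤ cell1C θ (l, h) := by
      have he : cell1C θ (l, h) = max (if c = 0 then 1 else 1 / |c|)
          (max (if mv ≤ 0 then 1 else 2 / mv) 1) := rfl
      rw [he, if_neg (not_le.mpr hmv0)]
      exact le_trans (le_max_left _ _) (le_max_right _ _)
    have h2m : 2 / mv ≤ KH θ B := le_trans hcell hKH
    have hKH0 := KH_pos (θ := θ) (B := B)
    have hprod : (2 / mv) * mv ≤ KH θ B * θ x := by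
      apply mul_le_mul h2m hθxmv (le_of_lt hmv0)
      linarith
    have e : (2 / mv) * mv = 2 := by field_simp
    linarith

lemma rho_ptwise (hθ : MinimalValid f θ)
    (hfin : (B ∩ Set.Icc (-9:ℝ) 9).Finite)
    (hBaff : ∀ x ∉ B, ∃ a b : ℝ, ∀ z ∈ connectedComponentIn Bᶜ x, θ z = a * z + b)
    (hθc : Continuous θ)
    (hρv : Valid f ρ) (hP : Pset f θ ⊆ Pset f ρ) :
    ∃ C5 : ℝ, 0 < C5 ∧ ∀ x : ℝ, ρ x ≤ C5 * θ x := by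
  obtain ⟨C0, hC0, hgrow⟩ := rho_growth hθ hfin hBaff hθc hρv hP
  have hρm := rho_min hθ hρv hP
  refine ⟨C0 * KH θ B, mul_pos hC0 KH_pos, fun x => ?_⟩
  have hper1 : ρ x = ρ (Int.fract x) := by
    rw [← mv_periodic hρm (Int.fract x) ⌊x⌋, Int.fract_add_floor]
  have hper2 : θ x = θ (Int.fract x) := by
    rw [← mv_periodic hθ (Int.fract x) ⌊x⌋, Int.fract_add_floor]
  rw [hper1, hper2]
  obtain ⟨w, hw0, hwb⟩ := hoffman1 hθ hfin hBaff hθc (Int.fract_nonneg x)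
    (le_of_lt (Int.fract_lt_one x))
  have hρw : ρ w = 0 := zero_transfer hθ hρv hP hw0
  have hsub : ρ (Int.fract x) ≤ ρ w + ρ (Int.fract x - w) := by
    have h' := mv_subadd hρm w (Int.fract x - w)
    have e : w + (Int.fract x - w) = Int.fract x := by ring
    rwa [e] at h'
  have hg := hgrow (Int.fract x - w)
  have h1 : C0 * |Int.fract x - w| ≤ C0 * (KH θ B * θ (Int.fract x)) :=
    mul_le_mul_of_nonneg_left hwb (le_of_lt hC0)
  rw [hρw] at hsub
  have e2 : C0 * (KH θ B * θ (Int.fract x)) = C0 * KH θ B * θ (Int.fract x) := by ring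
  linarith

end COMPARE

/-- THE CORE LEMMA : backward perturbation validity -/
lemma core {f : ℝ} {θ ρ : ℝ → ℝ}
    (hθm : MinimalValid f θ) (hcpl : ContPiecewiseLinear θ)
    (hρv : Valid f ρ) (hP : Pset f θ ⊆ Pset f ρ) :
    ∃ ε : ℝ, 0 < ε ∧ ε ≤ 1 ∧ Valid f (fun x => (1 + ε) * θ x - ε * ρ x) := by
  obtain ⟨⟨B, hBc, hBd, hBaff⟩, hθc⟩ := hcpl
  have hfin := discrete_closed_inter_finite hBc hBd (-9) 9
  obtain ⟨C2, hC2, hdel⟩ := del_compare hθm hfin hBaff hθc hρv hP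
  obtain ⟨C5, hC5, hpt⟩ := rho_ptwise hθm hfin hBaff hθc hρv hP
  have hρm := rho_min hθm hρv hP
  set ε := min 1 (min (1 / C2) (1 / C5)) with hεdef
  have hε0 : 0 < ε := lt_min one_pos (lt_min (by positivity) (by positivity))
  have hε1 : ε ≤ 1 := min_le_left _ _
  have hεC2 : ε * C2 ≤ 1 := by
    have h1 : ε ≤ 1 / C2 := le_trans (min_le_right _ _) (min_le_left _ _)
    rw [le_div_iff₀ hC2] at h1
    linarith
  have hεC5 : ε * C5 ≤ 1 := by
    have h1 : ε ≤ 1 / C5 := le_trans (min_le_right _ _) (le_trans (min_le_right _ _) (le_refl _))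
    rw [le_div_iff₀ hC5] at h1
    linarith
  set πe := fun x => (1 + ε) * θ x - ε * ρ x with hπe
  have hnn : ∀ x, 0 ≤ πe x := by
    intro x
    have h1 := hpt x
    have h2 := hθm.1.1 x
    have h3 : ε * ρ x ≤ ε * (C5 * θ x) := mul_le_mul_of_nonneg_left h1 (le_of_lt hε0)
    have h4 : ε * (C5 * θ x) = (ε * C5) * θ x := by ring
    have h5 : (ε * C5) * θ x ≤ 1 * θ x := mul_le_mul_of_nonneg_right hεC5 h2
    simp only [hπe]
    nlinarith
  have hsub : ∀ a b, πe (a + b) ≤ πe a + πe b := by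
    intro a b
    have h1 := hdel a b
    have h2 := del_nonneg (mv_subadd hθm) a b
    have h3 : ε * Del ρ a b ≤ ε * (C2 * Del θ a b) := mul_le_mul_of_nonneg_left h1 (le_of_lt hε0)
    have h4 : (ε * C2) * Del θ a b ≤ 1 * Del θ a b := mul_le_mul_of_nonneg_right hεC2 h2
    have h5 := del_nonneg (mv_subadd hρm) a b
    unfold Del at *
    simp only [hπe]
    nlinarith
  have hzero : πe 0 = 0 := by
    simp only [hπe]
    rw [mv_zero hθm, mv_zero hρm]; ring
  refine ⟨ε, hε0, hε1, hnn, ?_⟩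
  intro y hy
  show (1:ℝ) ≤ SS πe y
  have hlem := lemA hzero hsub y
  obtain ⟨z, hz⟩ := feas_sigy hy
  have hval : πe (sigy y) = 1 := by
    rw [hz]
    simp only [hπe]
    have h1 : θ (f + z) = θ f := by
      rw [show f + (z:ℝ) = f + (z:ℤ) from rfl]
      exact mv_periodic hθm f z
    have h2 : ρ (f + z) = ρ f := mv_periodic hρm f z
    rw [h1, h2, mv_f_one hθm, mv_f_one hρm]
    ring
  rw [hval] at hlem
  exact hlem
-- chunk K : telescoping equality transfer, PL combinations, extreme ⇒ facet
lemma nmul_eq_transfer {g h : ℝ → ℝ} (g0 : g 0 = 0) (h0 : h 0 = 0)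
    (gsub : ∀ a b, g (a + b) ≤ g a + g b)
    (hE : ∀ a b, Del g a b = 0 → Del h a b = 0) (a : ℝ) :
    ∀ n : ℕ, g ((n:ℝ) * a) = (n:ℝ) * g a → h ((n:ℝ) * a) = (n:ℝ) * h a := by
  intro n
  induction n with
  | zero => intro _; simpa using h0
  | succ n ih =>
      intro hg
      have e : ((n:ℝ) + 1) * a = (n:ℝ) * a + a := by ring
      push_cast at hg ⊢
      rw [e] at hg ⊢
      have h1 : g ((n:ℝ) * a + a) ≤ g ((n:ℝ) * a) + g a := gsub _ _
      have h2 : g ((n:ℝ) * a) ≤ (n:ℝ) * g a := subadd_nmul g0 gsub n a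
      have h3 : g ((n:ℝ) * a) = (n:ℝ) * g a := by linarith
      have h4 : Del g ((n:ℝ) * a) a = 0 := by unfold Del; linarith
      have h5 := hE _ _ h4
      unfold Del at h5
      have h6 := ih h3
      linarith

lemma lemA_eq_transfer {g h : ℝ → ℝ} (g0 : g 0 = 0) (h0 : h 0 = 0)
    (gsub : ∀ a b, g (a + b) ≤ g a + g b) (hsub : ∀ a b, h (a + b) ≤ h a + h b)
    (hE : ∀ a b, Del g a b = 0 → Del h a b = 0) :
    ∀ y : ℝ →₀ ℕ, g (sigy y) = SS g y → h (sigy y) = SS h y := by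
  intro y
  induction y using Finsupp.induction with
  | zero =>
      intro _
      simp [sigy, SS, h0]
  | single_add a n y ha hn ih =>
      intro hg
      rw [sigy_add, SS_add, sigy_single, SS_single] at hg ⊢
      have c1 : g (a * n + sigy y) ≤ g (a * n) + g (sigy y) := gsub _ _
      have c2 : g (sigy y) ≤ SS g y := lemA g0 gsub y
      have c3 : g (a * n) ≤ (n:ℝ) * g a := by
        have := subadd_nmul g0 gsub n a
        rwa [mul_comm (n:ℝ) a] at this
      have e1 : g (a * n) = (n:ℝ) * g a := by linarith
      have e2 : g (sigy y) = SS g y := by linarith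
      have e3 : Del g (a * n) (sigy y) = 0 := by unfold Del; linarith
      have h5 := hE _ _ e3
      unfold Del at h5
      have h6 := ih e2
      have h7 : h (a * n) = (n:ℝ) * h a := by
        have := nmul_eq_transfer g0 h0 gsub hE a n (by rwa [mul_comm a (n:ℝ)] at e1)
        rwa [mul_comm (n:ℝ) a] at this
      have : h (a * n + sigy y) = h (a * n) + h (sigy y) := by linarith
      rw [this, h7, h6]
      ring

lemma P_of_E {f : ℝ} {θ₁ θ₂ : ℝ → ℝ} (h1 : MinimalValid f θ₁) (h2 : MinimalValid f θ₂)
    (hE : ∀ a b, Del θ₁ a b = 0 → Del θ₂ a b = 0) :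
    Pset f θ₁ ⊆ Pset f θ₂ := by
  intro y hy
  obtain ⟨hyf, hy1⟩ := hy
  have hy1' : SS θ₁ y = 1 := hy1
  obtain ⟨z, hz⟩ := feas_sigy hyf
  have hval1 : θ₁ (sigy y) = 1 := by
    rw [hz, mv_periodic h1 f z]
    exact mv_f_one h1
  have hval2 : θ₂ (sigy y) = 1 := by
    rw [hz]
    have := mv_periodic h2 f z
    rw [this]
    exact mv_f_one h2
  have := lemA_eq_transfer (mv_zero h1) (mv_zero h2) (mv_subadd h1) (mv_subadd h2) hE y
    (by rw [hval1, hy1'])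
  refine ⟨hyf, ?_⟩
  show SS θ₂ y = 1
  rw [← this, hval2]

/-- piecewise linearity is preserved by affine combination -/
lemma PL_comb {g₁ g₂ : ℝ → ℝ} (h1 : PiecewiseLinear g₁) (h2 : PiecewiseLinear g₂) (c : ℝ) :
    PiecewiseLinear (fun x => g₁ x + c * g₂ x) := by
  obtain ⟨B₁, hB₁c, hB₁d, hB₁a⟩ := h1
  obtain ⟨B₂, hB₂c, hB₂d, hB₂a⟩ := h2
  refine ⟨B₁ ∪ B₂, hB₁c.union hB₂c, ?_, ?_⟩
  · intro x hx
    have hball : ∀ (B : Set ℝ), IsClosed B → (∀ u ∈ B, ∃ ε > (0:ℝ), ∀ y ∈ B, |y - u| < ε → y = u) →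
        ∃ ε > (0:ℝ), ∀ y ∈ B, |y - x| < ε → y = x := by
      intro B hc hd
      by_cases hxB : x ∈ B
      · exact hd x hxB
      · have : ∃ ε > (0:ℝ), Metric.ball x ε ∩ B = ∅ := by
          have hop : IsOpen Bᶜ := hc.isOpen_compl
          obtain ⟨ε, hε0, hsub⟩ := Metric.isOpen_iff.mp hop x hxB
          exact ⟨ε, hε0, by
            ext w
            simp only [Set.mem_inter_iff, Set.mem_empty_iff_false, iff_false, not_and]
            intro hw hwB
            exact (hsub hw) hwB⟩
        obtain ⟨ε, hε0, hball⟩ := this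
        refine ⟨ε, hε0, fun y hy hlt => ?_⟩
        exfalso
        have : y ∈ Metric.ball x ε ∩ B := ⟨by rwa [Metric.mem_ball, Real.dist_eq], hy⟩
        rw [hball] at this
        exact this
    obtain ⟨ε₁, hε₁0, hs₁⟩ := hball B₁ hB₁c hB₁d
    obtain ⟨ε₂, hε₂0, hs₂⟩ := hball B₂ hB₂c hB₂d
    refine ⟨min ε₁ ε₂, lt_min hε₁0 hε₂0, fun y hy hlt => ?_⟩
    rcases hy with hy | hy
    · exact hs₁ y hy (lt_of_lt_of_le hlt (min_le_left _ _))
    · exact hs₂ y hy (lt_of_lt_of_le hlt (min_le_right _ _))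
  · intro x hx
    have hx₁ : x ∉ B₁ := fun h => hx (Or.inl h)
    have hx₂ : x ∉ B₂ := fun h => hx (Or.inr h)
    obtain ⟨a₁, b₁, ha₁⟩ := hB₁a x hx₁
    obtain ⟨a₂, b₂, ha₂⟩ := hB₂a x hx₂
    refine ⟨a₁ + c * a₂, b₁ + c * b₂, fun z hz => ?_⟩
    have hsub1 : connectedComponentIn (B₁ ∪ B₂)ᶜ x ⊆ connectedComponentIn B₁ᶜ x :=
      connectedComponentIn_mono x (by
        intro w hw
        simp only [Set.mem_compl_iff] at hw ⊢
        exact fun h => hw (Or.inl h))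
    have hsub2 : connectedComponentIn (B₁ ∪ B₂)ᶜ x ⊆ connectedComponentIn B₂ᶜ x :=
      connectedComponentIn_mono x (by
        intro w hw
        simp only [Set.mem_compl_iff] at hw ⊢
        exact fun h => hw (Or.inr h))
    show g₁ z + c * g₂ z = (a₁ + c * a₂) * z + (b₁ + c * b₂)
    rw [ha₁ z (hsub1 hz), ha₂ z (hsub2 hz)]
    ring

/-- affine SS decomposition -/
lemma SS_affine (g₁ g₂ : ℝ → ℝ) (t : ℝ) (y : ℝ →₀ ℕ) :
    SS (fun x => g₁ x + t * g₂ x) y = SS g₁ y + t * SS g₂ y := by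
  have h := SS_comb 1 t g₁ g₂ y
  have e : (fun x => 1 * g₁ x + t * g₂ x) = (fun x => g₁ x + t * g₂ x) := by
    funext x; ring
  rw [e] at h
  rw [h]; ring

/-- extreme implies facet -/
lemma ext_to_facet {f : ℝ} {π : ℝ → ℝ} (hπ : MinimalValid f π)
    (hcpl : ContPiecewiseLinear π) (hE : ExtremeFunc f π) : IsFacet f π := by
  refine ⟨hπ.1, fun ρ hρv hP => ?_⟩
  obtain ⟨ε, hε0, hε1, hval2⟩ := core hπ hcpl hρv hP
  set π₁ := fun x => (1 - ε) * π x + ε * ρ x with hπ₁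
  set π₂ := fun x => (1 + ε) * π x - ε * ρ x with hπ₂
  have hv1 : Valid f π₁ := by
    constructor
    · intro x
      have := hπ.1.1 x
      have := hρv.1 x
      simp only [hπ₁]
      nlinarith
    · intro y hy
      show (1:ℝ) ≤ SS π₁ y
      have h2 : SS π₁ y = (1 - ε) * SS π y + ε * SS ρ y := SS_comb (1 - ε) ε π ρ y
      have h3 := valid_SS hπ.1 hy
      have h4 := valid_SS hρv hy
      rw [h2]
      nlinarith
  have havg : ∀ x, π x = (π₁ x + π₂ x) / 2 := by
    intro x; simp only [hπ₁, hπ₂]; ring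
  obtain ⟨he1, _⟩ := hE.2 π₁ π₂ hv1 hval2 havg
  funext x
  have := congrFun he1 x
  simp only [hπ₁] at this
  nlinarith [this]
-- chunk L : separation from non-extremality, and the main theorem
lemma min_of_avg {f : ℝ} {π π₁ π₂ : ℝ → ℝ} (hπ : MinimalValid f π)
    (hv1 : Valid f π₁) (hv2 : Valid f π₂) (havg : ∀ x, π x = (π₁ x + π₂ x) / 2) :
    MinimalValid f π₁ := by
  refine ⟨hv1, ?_⟩
  rintro ⟨σ, hσ, hle, hne⟩
  set τ := fun x => (1/2 : ℝ) * σ x + (1/2 : ℝ) * π₂ x with hτ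
  have hτv : Valid f τ := by
    constructor
    · intro x
      have h1 := hσ.1 x
      have h2 := hv2.1 x
      simp only [hτ]
      nlinarith
    · intro y hy
      show (1:ℝ) ≤ SS τ y
      rw [hτ, SS_comb (1/2) (1/2) σ π₂ y]
      have h1 := valid_SS hσ hy
      have h2 := valid_SS hv2 hy
      linarith
  have hτle : ∀ x, τ x ≤ π x := by
    intro x
    have h1 := hle x
    have h2 := havg x
    simp only [hτ]
    linarith
  have heq := mv_all hπ hτv hτle
  apply hne
  funext x
  have h3 := congrFun heq x
  simp only [hτ] at h3
  have h4 := havg x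
  linarith

lemma not_ext_sep {f : ℝ} {π : ℝ → ℝ} (hπ : MinimalValid f π)
    (hcpl : ContPiecewiseLinear π)
    (hprop : (∃ πt : ℝ → ℝ, πt ≠ 0 ∧ EffPerturb f π πt) →
      ∃ πt : ℝ → ℝ, πt ≠ 0 ∧ PiecewiseLinear πt ∧ EffPerturb f π πt)
    (hnE : ¬ ExtremeFunc f π) :
    ∃ ρ : ℝ → ℝ, Valid f ρ ∧ Pset f π ⊆ Pset f ρ ∧ Pset f π ≠ Pset f ρ := by
  -- step 1 : a nontrivial decomposition
  have hnB : ¬ ∀ π₁ π₂ : ℝ → ℝ, Valid f π₁ → Valid f π₂ →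
      (∀ x, π x = (π₁ x + π₂ x) / 2) → π₁ = π ∧ π₂ = π := fun h => hnE ⟨hπ.1, h⟩
  push_neg at hnB
  obtain ⟨π₁, π₂, hv1, hv2, havg, hne⟩ := hnB
  have hne1 : π₁ ≠ π := by
    intro h
    apply hne h
    funext x
    have h1 := havg x
    have h2 := congrFun h x
    linarith
  have hm1 : MinimalValid f π₁ := min_of_avg hπ hv1 hv2 havg
  have hm2 : MinimalValid f π₂ := min_of_avg hπ hv2 hv1 (fun x => by rw [havg x]; ring)
  -- step 2 : effective perturbation
  have heff : ∃ πt : ℝ → ℝ, πt ≠ 0 ∧ EffPerturb f π πt := by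
    refine ⟨fun x => π₁ x - π x, ?_, 1, one_pos, ?_, ?_⟩
    · intro h
      apply hne1
      funext x
      have := congrFun h x
      simp only [Pi.zero_apply] at this
      linarith
    · have e : (fun x => π x + 1 * (π₁ x - π x)) = π₁ := by funext x; ring
      rw [e]; exact hm1
    · have e : (fun x => π x - 1 * (π₁ x - π x)) = π₂ := by
        funext x
        have := havg x
        linarith
      rw [e]; exact hm2
  obtain ⟨πt, hπtne, hπtPL, εp, hεp0, hmp, hmm⟩ := hprop heff
  -- step 3 : basic consequences
  obtain ⟨⟨B, hBc, hBd, hBaff⟩, hπc⟩ := hcpl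
  have hfin := discrete_closed_inter_finite hBc hBd (-9) 9
  have hPt : ∀ y ∈ Pset f π, SS πt y = 0 ∧ y ∈ Pset f (fun x => π x + εp * πt x) := by
    intro y hy
    obtain ⟨hyf, hy1⟩ := hy
    have hy1' : SS π y = 1 := hy1
    have h1 := valid_SS hmp.1 hyf
    have h2 := valid_SS hmm.1 hyf
    have e1 : SS (fun x => π x + εp * πt x) y = SS π y + εp * SS πt y := SS_affine π πt εp y
    have e2 : SS (fun x => π x - εp * πt x) y = SS π y + (-εp) * SS πt y := by
      have e : (fun x => π x - εp * πt x) = fun x => π x + (-εp) * πt x := by funext x; ring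
      rw [e]; exact SS_affine π πt (-εp) y
    rw [e1, hy1'] at h1
    rw [e2, hy1'] at h2
    have h0 : SS πt y = 0 := by nlinarith
    exact ⟨h0, hyf, by show SS (fun x => π x + εp * πt x) y = 1; rw [e1, hy1', h0]; ring⟩
  have hP1 : Pset f π ⊆ Pset f (fun x => π x + εp * πt x) := fun y hy => (hPt y hy).2
  -- symmetry-oddness of πt
  have hsymodd : ∀ x, πt x + πt (f - x) = 0 := by
    intro x
    have h1 := mv_sym hmp x
    have h2 := mv_sym hπ x
    nlinarith [hεp0]
  -- a point where πt is negative
  obtain ⟨x₀, hx₀⟩ : ∃ x₀, πt x₀ < 0 := by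
    obtain ⟨x, hx⟩ := Function.ne_iff.mp hπtne
    simp only [Pi.zero_apply] at hx
    rcases lt_or_gt_of_ne hx with h | h
    · exact ⟨x, h⟩
    · refine ⟨f - x, ?_⟩
      have := hsymodd x
      linarith
  -- continuity of πt
  obtain ⟨C0, hC00, hgrow⟩ := rho_growth hπ hfin hBaff hπc hmp.1 hP1
  have hlip := rho_lip_of_growth hmp hgrow
  have hρ₁c : Continuous (fun x => π x + εp * πt x) := cont_of_lip (le_of_lt hC00) hlip
  have hπtc : Continuous πt := by
    have e : πt = fun x => ((π x + εp * πt x) - π x) / εp := by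
      funext x
      rw [eq_div_iff hεp0.ne']; ring
    rw [e]
    exact (hρ₁c.sub hπc).div_const εp
  -- step 4 : the maximal valid multiple
  set T := {t : ℝ | εp ≤ t ∧ Valid f (fun x => π x + t * πt x)} with hT
  have hTne : εp ∈ T := ⟨le_refl _, hmp.1⟩
  have hπx₀ : 0 ≤ π x₀ := hπ.1.1 x₀
  have hTbdd : BddAbove T := by
    refine ⟨π x₀ / (-πt x₀), fun t ht => ?_⟩
    have h1 := ht.2.1 x₀
    simp only at h1
    rw [le_div_iff₀ (by linarith : (0:ℝ) < -πt x₀)]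
    nlinarith
  have hTclosed : IsClosed T := by
    have he : T = Set.Ici εp ∩ ((⋂ x : ℝ, {t : ℝ | 0 ≤ π x + t * πt x}) ∩
        (⋂ y ∈ {y : ℝ →₀ ℕ | Feasible f y}, {t : ℝ | 1 ≤ SS π y + t * SS πt y})) := by
      ext t
      simp only [hT, Set.mem_setOf_eq, Set.mem_inter_iff, Set.mem_Ici, Set.mem_iInter]
      constructor
      · rintro ⟨h1, h2, h3⟩
        refine ⟨h1, fun x => h2 x, fun y hy => ?_⟩
        have := h3 y hy
        rw [show (∑ r ∈ y.support, (fun x => π x + t * πt x) r * ((y r : ℕ):ℝ))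
          = SS (fun x => π x + t * πt x) y from rfl, SS_affine π πt t y] at this
        exact this
      · rintro ⟨h1, h2, h3⟩
        refine ⟨h1, fun x => h2 x, fun y hy => ?_⟩
        show (1:ℝ) ≤ SS (fun x => π x + t * πt x) y
        rw [SS_affine π πt t y]
        exact h3 y hy
    rw [he]
    refine isClosed_Ici.inter (IsClosed.inter ?_ ?_)
    · exact isClosed_iInter (fun x => isClosed_le continuous_const
        (continuous_const.add (continuous_id'.mul continuous_const)))
    · exact isClosed_biInter (fun y hy => isClosed_le continuous_const
        (continuous_const.add (continuous_id'.mul continuous_const)))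
  set td := sSup T with htddef
  have htd : td ∈ T := hTclosed.csSup_mem ⟨εp, hTne⟩ hTbdd
  have htdpos : 0 < td := lt_of_lt_of_le hεp0 htd.1
  set πθ := fun x => π x + td * πt x with hπθdef
  have hπθv : Valid f πθ := htd.2
  have hπθsym : ∀ x, πθ x + πθ (f - x) = 1 := by
    intro x
    have h1 := mv_sym hπ x
    have h2 := hsymodd x
    simp only [hπθdef]
    nlinarith
  have hπθm : MinimalValid f πθ := valid_sym_min hπθv hπθsym
  have hπθcpl : ContPiecewiseLinear πθ :=
    ⟨PL_comb ⟨B, hBc, hBd, hBaff⟩ hπtPL td, hπc.add (continuous_const.mul hπtc)⟩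
  have hPθ : Pset f π ⊆ Pset f πθ := by
    intro y hy
    have h0 := (hPt y hy).1
    obtain ⟨hyf, hy1⟩ := hy
    have hy1' : SS π y = 1 := hy1
    refine ⟨hyf, ?_⟩
    show SS πθ y = 1
    rw [hπθdef, SS_affine π πt td y, hy1', h0]
    ring
  -- step 5 : dichotomy
  by_cases hwit : ∃ p : ℝ × ℝ, Del πθ p.1 p.2 = 0 ∧ 0 < Del π p.1 p.2
  · obtain ⟨⟨a, b⟩, hD0, hDpos⟩ := hwit
    refine ⟨πθ, hπθv, hPθ, ?_⟩
    intro heq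
    have hyθ := tripy_mem_P hπθm hD0
    rw [← heq] at hyθ
    have h1 : SS π (tripy f a b) = 1 := hyθ.2
    have h2 : SS π (tripy f a b) = Del π a b + 1 := by
      rw [SS_tripy]
      have h3 := mv_sym hπ (a + b)
      have e : f - a - b = f - (a + b) := by ring
      rw [e]
      unfold Del
      linarith
    linarith
  · push_neg at hwit
    have hEc : ∀ a b : ℝ, Del πθ a b = 0 → Del π a b = 0 := by
      intro a b h
      exact le_antisymm (hwit (a, b) h) (del_nonneg (mv_subadd hπ) a b)
    have hPθπ : Pset f πθ ⊆ Pset f π := P_of_E hπθm hπ hEc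
    obtain ⟨ε', hε'0, hε'1, hval'⟩ := core hπθm hπθcpl hπ.1 hPθπ
    exfalso
    set t' := (1 + ε') * td with ht'def
    have ht'T : t' ∈ T := by
      constructor
      · have : td ≤ t' := by rw [ht'def]; nlinarith
        linarith [htd.1]
      · have e : (fun x => π x + t' * πt x) = (fun x => (1 + ε') * πθ x - ε' * π x) := by
          funext x
          simp only [hπθdef, ht'def]
          ring
        rw [e]
        exact hval'
    have hle := le_csSup hTbdd ht'T
    rw [ht'def] at hle
    nlinarith [mul_pos hε'0 htdpos]

theorem stmt8 (f : ℝ) (hf : f ∈ Set.Ioo (0 : ℝ) 1) (π : ℝ → ℝ)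
    (hπ : MinimalValid f π) (hcpl : ContPiecewiseLinear π)
    (hprop : (∃ πt : ℝ → ℝ, πt ≠ 0 ∧ EffPerturb f π πt) →
      ∃ πt : ℝ → ℝ, πt ≠ 0 ∧ PiecewiseLinear πt ∧ EffPerturb f π πt) :
    (ExtremeFunc f π ↔ IsFacet f π) ∧ (IsFacet f π ↔ IsWeakFacet f π) := by

  have hEF : ExtremeFunc f π ↔ IsFacet f π := by
    constructor
    · exact ext_to_facet hπ hcpl
    · intro hF
      refine ⟨hπ.1, fun π₁ π₂ hv1 hv2 havg => ?_⟩
      have hP1 : Pset f π ⊆ Pset f π₁ := by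
        intro y hy
        obtain ⟨hyf, hy1⟩ := hy
        have hy1' : SS π y = 1 := hy1
        have h1 := valid_SS hv1 hyf
        have h2 := valid_SS hv2 hyf
        have hsum : SS π₁ y + SS π₂ y = 2 * SS π y := by
          have h3 := SS_comb 1 1 π₁ π₂ y
          have h4 := SS_comb 2 0 π π y
          have e : (fun x => 1 * π₁ x + 1 * π₂ x) = fun x => 2 * π x + 0 * π x := by
            funext x
            have := havg x
            linarith
          rw [e, h4] at h3
          linarith
        refine ⟨hyf, ?_⟩
        show SS π₁ y = 1
        rw [hy1'] at hsum
        linarith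
      have he1 : π₁ = π := hF.2 π₁ hv1 hP1
      refine ⟨he1, ?_⟩
      funext x
      have h5 := havg x
      rw [he1] at h5
      linarith
  have hnEW : ¬ ExtremeFunc f π → ¬ IsWeakFacet f π := by
    intro hnE hW
    obtain ⟨ρ, hv, hP, hne⟩ := not_ext_sep hπ hcpl hprop hnE
    exact hne (hW.2 ρ hv hP)
  refine ⟨hEF, ⟨fun hF => ⟨hF.1, fun ρ hv hP => by rw [hF.2 ρ hv hP]⟩, fun hW => ?_⟩⟩
  exact hEF.mp (by_contra fun h => hnEW h hW)
end rhogrowth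
end
end

section
/- Let F ⊂ [0,1]² be a convex polygon (the convex hull of a nonempty finite set of points, with vertex set verts(F)), and let g : F → ℝ be the restriction of an affine function. Suppose there is m > 0 such that for each vertex v of F, either g(v) = 0 or g(v) ≥ m. Let S = {x ∈ F : g(x) = 0} and assume S is nonempty. Then g(x) ≥ m·d(x, S)/2 for every x ∈ F, where d(x, S) denotes the Euclidean distance from x to S. -/
lemma aux_g_sum (a : EuclideanSpace ℝ (Fin 2)) (b : ℝ)
    (T : Finset (EuclideanSpace ℝ (Fin 2))) (w : EuclideanSpace ℝ (Fin 2) → ℝ)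
    (hw : ∑ y ∈ T, w y = 1) :
    (inner ℝ a (∑ y ∈ T, w y • y) : ℝ) + b = ∑ y ∈ T, w y * ((inner ℝ a y : ℝ) + b) := by
  rw [inner_sum]
  simp only [real_inner_smul_right]
  have h : ∑ y ∈ T, w y * ((inner ℝ a y : ℝ) + b)
      = ∑ y ∈ T, w y * (inner ℝ a y : ℝ) + ∑ y ∈ T, w y * b := by
    rw [← Finset.sum_add_distrib]; apply Finset.sum_congr rfl; intros; ring
  rw [h, ← Finset.sum_mul, hw, one_mul]

theorem stmt10 (V : Finset (EuclideanSpace ℝ (Fin 2))) (hV : V.Nonempty)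
    (hV01 : ∀ v ∈ V, ∀ i, v i ∈ Set.Icc (0 : ℝ) 1)
    (F : Set (EuclideanSpace ℝ (Fin 2))) (hF : F = convexHull ℝ (V : Set (EuclideanSpace ℝ (Fin 2))))
    (a : EuclideanSpace ℝ (Fin 2)) (b : ℝ) (g : EuclideanSpace ℝ (Fin 2) → ℝ)
    (hg : ∀ x, g x = (inner ℝ a x : ℝ) + b)
    (m : ℝ) (hm : 0 < m)
    (hvert : ∀ v ∈ Set.extremePoints ℝ F, g v = 0 ∨ m ≤ g v)
    (S : Set (EuclideanSpace ℝ (Fin 2))) (hS : S = {x ∈ F | g x = 0}) (hSne : S.Nonempty) :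
    ∀ x ∈ F, m * Metric.infDist x S / 2 ≤ g x := by
  intro x hx
  -- the unit box
  set Box : Set (EuclideanSpace ℝ (Fin 2)) := {p | ∀ i, p i ∈ Set.Icc (0:ℝ) 1} with hBoxdef
  have hBoxConv : Convex ℝ Box := by
    intro p hp q hq α β hα hβ hαβ i
    have hp' := hp i; have hq' := hq i
    simp only [Set.mem_Icc] at hp' hq' ⊢
    have : (α • p + β • q) i = α * p i + β * q i := by
      simp [PiLp.add_apply, PiLp.smul_apply, smul_eq_mul]
    rw [this]
    constructor
    · nlinarith [hp'.1, hq'.1]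
    · nlinarith [hp'.2, hq'.2]
  have hFBox : F ⊆ Box := by
    rw [hF]
    exact convexHull_min (fun v hv i => hV01 v hv i) hBoxConv
  have hdist : ∀ u ∈ Box, ∀ v ∈ Box, dist u v ≤ 2 := by
    intro u hu v hv
    rw [EuclideanSpace.dist_eq]
    have h4 : Real.sqrt 4 = 2 := by
      rw [show (4:ℝ) = 2^2 by norm_num, Real.sqrt_sq (by norm_num)]
    rw [← h4]
    apply Real.sqrt_le_sqrt
    rw [Fin.sum_univ_two]
    have h0 := hu 0; have h1 := hu 1; have h0' := hv 0; have h1' := hv 1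
    simp only [Set.mem_Icc] at h0 h1 h0' h1'
    simp only [Real.dist_eq]
    have e0 : |u 0 - v 0| ≤ 1 := by rw [abs_le]; constructor <;> linarith [h0.1, h0.2, h0'.1, h0'.2]
    have e1 : |u 1 - v 1| ≤ 1 := by rw [abs_le]; constructor <;> linarith [h1.1, h1.2, h1'.1, h1'.2]
    nlinarith [abs_nonneg (u 0 - v 0), abs_nonneg (u 1 - v 1), e0, e1]
  have hFconv : Convex ℝ F := hF ▸ convex_convexHull ℝ _
  have hFcomp : IsCompact F := hF ▸ V.finite_toSet.isCompact_convexHull ℝ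
  have hEV : Set.extremePoints ℝ F ⊆ (V : Set (EuclideanSpace ℝ (Fin 2))) := by
    rw [hF]; exact extremePoints_convexHull_subset
  have hEfin : (Set.extremePoints ℝ F).Finite := V.finite_toSet.subset hEV
  have hEF : Set.extremePoints ℝ F ⊆ F := extremePoints_subset
  have hFE : F = convexHull ℝ (Set.extremePoints ℝ F) := by
    conv_lhs => rw [← closure_convexHull_extremePoints hFcomp hFconv]
    exact (hEfin.isCompact_convexHull ℝ).isClosed.closure_eq
  set T := hEfin.toFinset with hTdef
  have hTE : (T : Set (EuclideanSpace ℝ (Fin 2))) = Set.extremePoints ℝ F := hEfin.coe_toFinset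
  have hxT : x ∈ convexHull ℝ (T : Set (EuclideanSpace ℝ (Fin 2))) := by
    rw [hTE, ← hFE]; exact hx
  rw [Finset.convexHull_eq] at hxT
  obtain ⟨w, hw0, hw1, hwx⟩ := hxT
  have hxsum : x = ∑ y ∈ T, w y • y := by
    rw [← hwx, Finset.centerMass_eq_of_sum_1 _ _ hw1]
    simp
  set P := T.filter (fun y => ¬ g y = 0) with hPdef
  set Z := T.filter (fun y => g y = 0) with hZdef
  set t := ∑ y ∈ P, w y with htdef
  have hsplit : ∑ y ∈ Z, w y + t = 1 := by
    rw [htdef, hZdef, hPdef, Finset.sum_filter_add_sum_filter_not, hw1]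
  have hmemE : ∀ y ∈ T, y ∈ Set.extremePoints ℝ F := by
    intro y hy; rwa [← hTE]
  have hgm : ∀ y ∈ P, m ≤ g y := by
    intro y hy
    rw [hPdef, Finset.mem_filter] at hy
    rcases hvert y (hmemE y hy.1) with h | h
    · exact absurd h hy.2
    · exact h
  have hgx : g x = ∑ y ∈ T, w y * g y := by
    rw [hg, hxsum, aux_g_sum a b T w hw1]
    apply Finset.sum_congr rfl; intro y _; rw [hg]
  have hgxt : m * t ≤ g x := by
    have h1 : g x = ∑ y ∈ Z, w y * g y + ∑ y ∈ P, w y * g y := by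
      rw [hgx, hZdef, hPdef, Finset.sum_filter_add_sum_filter_not]
    have h2 : ∑ y ∈ Z, w y * g y = 0 := by
      apply Finset.sum_eq_zero
      intro y hy
      rw [hZdef, Finset.mem_filter] at hy
      rw [hy.2, mul_zero]
    have h3 : ∑ y ∈ P, w y * m ≤ ∑ y ∈ P, w y * g y := by
      apply Finset.sum_le_sum
      intro y hy
      exact mul_le_mul_of_nonneg_left (hgm y hy) (hw0 y (Finset.mem_of_mem_filter y hy))
    rw [h1, h2, zero_add]
    calc m * t = ∑ y ∈ P, w y * m := by rw [Finset.mul_sum]; apply Finset.sum_congr rfl; intros; ring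
      _ ≤ _ := h3
  have htnn : 0 ≤ t := Finset.sum_nonneg fun y hy => hw0 y (Finset.mem_of_mem_filter y hy)
  have ht1 : t ≤ 1 := by
    have hZnn : 0 ≤ ∑ y ∈ Z, w y :=
      Finset.sum_nonneg fun y hy => hw0 y (Finset.mem_of_mem_filter y hy)
    linarith
  have hkey : Metric.infDist x S ≤ 2 * t := by
    rcases eq_or_lt_of_le ht1 with h1 | h1
    · obtain ⟨s0, hs0⟩ := hSne
      have hs0F : s0 ∈ F := by rw [hS] at hs0; exact hs0.1
      calc Metric.infDist x S ≤ dist x s0 := Metric.infDist_le_dist_of_mem hs0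
        _ ≤ 2 := hdist x (hFBox hx) s0 (hFBox hs0F)
        _ = 2 * t := by rw [h1, mul_one]
    · set s := 1 - t with hsdef
      have hspos : 0 < s := by linarith
      have hZsum : ∑ y ∈ Z, w y = s := by rw [hsdef]; linarith
      set z := s⁻¹ • ∑ y ∈ Z, w y • y with hzdef
      have hzsum : ∑ y ∈ Z, w y • y = s • z := by
        rw [hzdef, smul_inv_smul₀ hspos.ne']
      have hz1 : ∑ y ∈ Z, s⁻¹ * w y = 1 := by
        rw [← Finset.mul_sum, hZsum, inv_mul_cancel₀ hspos.ne']
      have hzF : z ∈ convexHull ℝ (Z : Set (EuclideanSpace ℝ (Fin 2))) := by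
        rw [Finset.convexHull_eq]
        refine ⟨fun y => s⁻¹ * w y, fun y hy => mul_nonneg (inv_nonneg.2 hspos.le)
          (hw0 y (Finset.mem_of_mem_filter y hy)), hz1, ?_⟩
        rw [Finset.centerMass_eq_of_sum_1 _ _ hz1]
        simp only [id]
        rw [hzdef, Finset.smul_sum]
        apply Finset.sum_congr rfl
        intros; rw [smul_smul]
      have hzF' : z ∈ F := by
        have : convexHull ℝ (Z : Set (EuclideanSpace ℝ (Fin 2))) ⊆ F := by
          apply convexHull_min _ hFconv
          intro y hy
          have : y ∈ T := Finset.mem_of_mem_filter y hy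
          exact hEF (hmemE y this)
        exact this hzF
      have hgz : g z = 0 := by
        rw [hg, hzdef]
        have := aux_g_sum a b Z (fun y => s⁻¹ * w y) hz1
        rw [show (s⁻¹ • ∑ y ∈ Z, w y • y) = ∑ y ∈ Z, (s⁻¹ * w y) • y by
          rw [Finset.smul_sum]; apply Finset.sum_congr rfl; intros; rw [smul_smul]]
        rw [this]
        apply Finset.sum_eq_zero
        intro y hy
        rw [hZdef, Finset.mem_filter] at hy
        have := hy.2; rw [hg] at this
        rw [this, mul_zero]
      have hzS : z ∈ S := by rw [hS]; exact ⟨hzF', hgz⟩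
      have hxz : x - z = ∑ y ∈ P, w y • (y - z) := by
        have hsplit2 : x = ∑ y ∈ Z, w y • y + ∑ y ∈ P, w y • y := by
          rw [hxsum, hZdef, hPdef, Finset.sum_filter_add_sum_filter_not]
        rw [hsplit2, hzsum]
        have hR : ∑ y ∈ P, w y • (y - z) = ∑ y ∈ P, w y • y - t • z := by
          simp only [smul_sub]
          rw [Finset.sum_sub_distrib, ← Finset.sum_smul]
        rw [hR, hsdef]
        module
      have hnorm : ‖x - z‖ ≤ 2 * t := by
        rw [hxz]
        calc ‖∑ y ∈ P, w y • (y - z)‖ ≤ ∑ y ∈ P, ‖w y • (y - z)‖ := norm_sum_le _ _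
          _ ≤ ∑ y ∈ P, w y * 2 := by
              apply Finset.sum_le_sum
              intro y hy
              rw [norm_smul, Real.norm_eq_abs, abs_of_nonneg (hw0 y (Finset.mem_of_mem_filter y hy))]
              apply mul_le_mul_of_nonneg_left _ (hw0 y (Finset.mem_of_mem_filter y hy))
              rw [← dist_eq_norm]
              exact hdist y (hFBox (hEF (hmemE y (Finset.mem_of_mem_filter y hy)))) z (hFBox hzF')
          _ = 2 * t := by rw [htdef, Finset.mul_sum]; apply Finset.sum_congr rfl; intros; ring
      calc Metric.infDist x S ≤ dist x z := Metric.infDist_le_dist_of_mem hzS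
        _ = ‖x - z‖ := dist_eq_norm x z
        _ ≤ 2 * t := hnorm
  nlinarith [hgxt, hkey, Metric.infDist_nonneg (x := x) (s := S), hm.le]
end
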